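/- arXiv:math/0505353 — 5 statements merged into one kernel-verified Lean document; each statement's English description precedes it below -/
import Mathlib

section
/- (A2) implies (A1). Suppose f : ℕ × D × X × U → X satisfies hypothesis (A2). Then there exist functions ζ ∈ K∞ and β ∈ K⁺ such that ‖f(t,d,x,u)‖_X ≤ ζ(β(t)·max{‖x‖_X, ‖u‖_U}) for all (t,x,d,u) ∈ ℕ × X × D × U; in particular hypothesis (A1) holds, i.e. there exist a ∈ K∞ and β ∈ K⁺ with ‖f(t,d,x,u)‖_X ≤ a(β(t)‖x‖_X) + a(β(t)‖u‖_U) for all (t,x,d,u). -/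
open Filter Topology Bornology Set intervalIntegral

noncomputable section

/-- Class `K∞`: continuous, strictly increasing on `[0,∞)`, zero at zero, unbounded. -/
def IsKInf (a : ℝ → ℝ) : Prop :=
  ContinuousOn a (Set.Ici 0) ∧ StrictMonoOn a (Set.Ici 0) ∧ a 0 = 0 ∧
    Filter.Tendsto a Filter.atTop Filter.atTop

/-- Class `K⁺`: continuous and positive on `[0,∞)`. -/
def IsKPlus (b : ℝ → ℝ) : Prop :=
  ContinuousOn b (Set.Ici 0) ∧ ∀ t : ℝ, 0 ≤ t → 0 < b t

/-- Class `KL`. -/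
def IsKL (σ : ℝ → ℝ → ℝ) : Prop :=
  ContinuousOn (fun p : ℝ × ℝ => σ p.1 p.2) (Set.Ici 0 ×ˢ Set.Ici 0) ∧
  (∀ t : ℝ, 0 ≤ t → StrictMonoOn (fun s => σ s t) (Set.Ici 0) ∧ σ 0 t = 0) ∧
  (∀ s : ℝ, 0 ≤ s → AntitoneOn (fun t => σ s t) (Set.Ici 0) ∧
    Filter.Tendsto (fun t => σ s t) Filter.atTop (nhds 0))

namespace A2A1

/-! ### Ramp sum part -/

def Tfun (c q : ℕ × ℕ → ℝ) (s : ℝ) : ℝ := ∑' p, c p * min 1 (max 0 s / q p)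

variable {c q : ℕ × ℕ → ℝ}

lemma term_nonneg (hc : ∀ p, 0 ≤ c p) (hq : ∀ p, 0 < q p) (s : ℝ) (p : ℕ × ℕ) :
    0 ≤ c p * min 1 (max 0 s / q p) :=
  mul_nonneg (hc p) (le_min zero_le_one (div_nonneg (le_max_left _ _) (hq p).le))

lemma term_le (hc : ∀ p, 0 ≤ c p) (hq : ∀ p, 0 < q p) (s : ℝ) (p : ℕ × ℕ) :
    c p * min 1 (max 0 s / q p) ≤ c p :=
  mul_le_of_le_one_right (hc p) (min_le_left _ _)

lemma summable_term (hc : ∀ p, 0 ≤ c p) (hq : ∀ p, 0 < q p) (hs : Summable c) (s : ℝ) :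
    Summable fun p => c p * min 1 (max 0 s / q p) :=
  hs.of_nonneg_of_le (term_nonneg hc hq s) (term_le hc hq s)

lemma Tfun_continuous (hc : ∀ p, 0 ≤ c p) (hq : ∀ p, 0 < q p) (hs : Summable c) :
    Continuous (Tfun c q) := by
  apply continuous_tsum (u := c) ?_ hs ?_
  · intro p
    exact continuous_const.mul ((continuous_const.min
      (((continuous_const.max continuous_id)).div_const _)))
  · intro p x
    rw [Real.norm_eq_abs, abs_of_nonneg (term_nonneg hc hq x p)]
    exact term_le hc hq x p

lemma Tfun_mono (hc : ∀ p, 0 ≤ c p) (hq : ∀ p, 0 < q p) (hs : Summable c) :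
    Monotone (Tfun c q) := by
  intro a b hab
  apply Summable.tsum_le_tsum _ (summable_term hc hq hs a) (summable_term hc hq hs b)
  intro p
  have := hq p
  have := hc p
  gcongr

lemma Tfun_nonneg (hc : ∀ p, 0 ≤ c p) (hq : ∀ p, 0 < q p) (s : ℝ) : 0 ≤ Tfun c q s :=
  tsum_nonneg (term_nonneg hc hq s)

lemma Tfun_zero : Tfun c q 0 = 0 := by
  simp [Tfun]

lemma le_Tfun (hc : ∀ p, 0 ≤ c p) (hq : ∀ p, 0 < q p) (hs : Summable c) {s : ℝ}
    (p : ℕ × ℕ) (h : q p ≤ s) : c p ≤ Tfun c q s := by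
  have h0 : (0:ℝ) < s := lt_of_lt_of_le (hq p) h
  have : c p * min 1 (max 0 s / q p) = c p := by
    rw [max_eq_right h0.le, min_eq_left, mul_one]
    rw [le_div_iff₀ (hq p), one_mul]
    exact h
  calc c p = c p * min 1 (max 0 s / q p) := this.symm
    _ ≤ Tfun c q s := Summable.le_tsum (summable_term hc hq hs s) p
        (fun j _ => term_nonneg hc hq s j)



/-! ### Integral majorant part -/

def Gfun (K : ℝ → ℝ) (s : ℝ) : ℝ := if s ≤ 0 then 0 else (∫ u in (0:ℝ)..(2*s), K u) / s

variable {K : ℝ → ℝ}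

lemma F_nonneg (hK0 : ∀ u, 0 ≤ K u) {x : ℝ} (hx : 0 ≤ x) :
    0 ≤ ∫ u in (0:ℝ)..x, K u :=
  intervalIntegral.integral_nonneg hx (fun u _ => hK0 u)

lemma F_lower (hK : Monotone K) (hK0 : ∀ u, 0 ≤ K u) {s : ℝ} (hs : 0 < s) :
    s * K s ≤ ∫ u in (0:ℝ)..(2*s), K u := by
  have h1 : (∫ u in (0:ℝ)..s, K u) + (∫ u in s..(2*s), K u)
      = ∫ u in (0:ℝ)..(2*s), K u :=
    intervalIntegral.integral_add_adjacent_intervals hK.intervalIntegrable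
      hK.intervalIntegrable
  have h2 : (∫ u in s..(2*s), K u) ≥ ∫ u in s..(2*s), K s := by
    apply intervalIntegral.integral_mono_on (by linarith) intervalIntegrable_const
      hK.intervalIntegrable
    intro u hu
    exact hK hu.1
  have h3 : (∫ u in s..(2*s), (K s : ℝ)) = s * K s := by
    rw [intervalIntegral.integral_const, smul_eq_mul]; ring
  have h4 := F_nonneg hK0 hs.le
  linarith [h2, h1, h3, h4]

lemma F_upper (hK : Monotone K) {s : ℝ} (hs : 0 ≤ s) :
    (∫ u in (0:ℝ)..s, K u) ≤ s * K s := by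
  have h2 : (∫ u in (0:ℝ)..s, K u) ≤ ∫ u in (0:ℝ)..s, K s := by
    apply intervalIntegral.integral_mono_on hs hK.intervalIntegrable
      intervalIntegrable_const
    intro u hu
    exact hK hu.2
  have h3 : (∫ u in (0:ℝ)..s, (K s : ℝ)) = s * K s := by
    rw [intervalIntegral.integral_const, smul_eq_mul]; ring
  linarith

lemma Gfun_nonneg (hK0 : ∀ u, 0 ≤ K u) (s : ℝ) : 0 ≤ Gfun K s := by
  unfold Gfun
  split_ifs with h
  · exact le_refl _
  · push_neg at h
    exact div_nonneg (F_nonneg hK0 (by linarith)) h.le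

lemma Gfun_ge (hK : Monotone K) (hK0 : ∀ u, 0 ≤ K u) {s : ℝ} (hs : 0 < s) :
    K s ≤ Gfun K s := by
  unfold Gfun
  rw [if_neg (not_le.2 hs), le_div_iff₀ hs, mul_comm]
  exact F_lower hK hK0 hs

lemma Gfun_mono (hK : Monotone K) (hK0 : ∀ u, 0 ≤ K u) :
    MonotoneOn (Gfun K) (Ici 0) := by
  intro a ha b hb hab
  rcases eq_or_lt_of_le (mem_Ici.1 ha) with h0 | h0
  · rw [← h0]
    have : Gfun K 0 = 0 := by simp [Gfun]
    rw [this]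
    exact Gfun_nonneg hK0 b
  · have hb0 : 0 < b := lt_of_lt_of_le h0 hab
    unfold Gfun
    rw [if_neg (not_le.2 h0), if_neg (not_le.2 hb0), div_le_div_iff₀ h0 hb0]
    have hsplit : (∫ u in (0:ℝ)..(2*a), K u) + (∫ u in (2*a)..(2*b), K u)
        = ∫ u in (0:ℝ)..(2*b), K u :=
      intervalIntegral.integral_add_adjacent_intervals hK.intervalIntegrable
        hK.intervalIntegrable
    have hI : (2*b - 2*a) * K (2*a) ≤ ∫ u in (2*a)..(2*b), K u := by
      have h2 : (∫ u in (2*a)..(2*b), K u) ≥ ∫ u in (2*a)..(2*b), K (2*a) := by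
        apply intervalIntegral.integral_mono_on (by linarith) intervalIntegrable_const
          hK.intervalIntegrable
        intro u hu
        exact hK hu.1
      have h3 : (∫ u in (2*a)..(2*b), (K (2*a) : ℝ)) = (2*b - 2*a) * K (2*a) := by
        rw [intervalIntegral.integral_const, smul_eq_mul]
      linarith
    have hup : (∫ u in (0:ℝ)..(2*a), K u) ≤ (2*a) * K (2*a) := F_upper hK (by linarith)
    have hk0 : 0 ≤ K (2*a) := hK0 _
    nlinarith [hsplit, hI, hup, hk0, hab, h0]

lemma Gfun_zero_near (hK1 : ∀ u, u < 1 → K u = 0) {s : ℝ} (hs0 : 0 ≤ s) (hs : s < 1/2) :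
    Gfun K s = 0 := by
  unfold Gfun
  split_ifs with h
  · rfl
  · push_neg at h
    have : (∫ u in (0:ℝ)..(2*s), K u) = ∫ u in (0:ℝ)..(2*s), (0:ℝ) := by
      apply intervalIntegral.integral_congr
      intro u hu
      rw [Set.uIcc_of_le (by linarith : (0:ℝ) ≤ 2*s)] at hu
      exact hK1 u (by cases hu; linarith)
    rw [this, intervalIntegral.integral_zero, zero_div]

lemma Gfun_continuousOn (hK : Monotone K) (hK1 : ∀ u, u < 1 → K u = 0) :
    ContinuousOn (Gfun K) (Ici 0) := by
  have hFcont : Continuous fun x => ∫ u in (0:ℝ)..x, K u :=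
    intervalIntegral.continuous_primitive (fun a b => hK.intervalIntegrable) 0
  intro s hs
  rcases eq_or_lt_of_le (mem_Ici.1 hs) with h0 | h0
  · -- s = 0 : Gfun vanishes on Ico 0 (1/2)
    rw [← h0]
    have hmem : Ico (0:ℝ) (1/2) ∈ 𝓝[Ici 0] (0:ℝ) := by
      rw [← Ici_inter_Iio]
      exact inter_mem_nhdsWithin _ (Iio_mem_nhds (by norm_num))
    apply ContinuousWithinAt.congr_of_eventuallyEq continuousWithinAt_const
      (Filter.eventuallyEq_of_mem hmem (fun x hx => Gfun_zero_near hK1 hx.1 hx.2))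
    exact Gfun_zero_near hK1 le_rfl (by norm_num)
  · -- s > 0 : Gfun = F(2s)/s near s
    apply ContinuousAt.continuousWithinAt
    have heq : ∀ x ∈ Ioi (0:ℝ), Gfun K x = (∫ u in (0:ℝ)..(2*x), K u) / x := by
      intro x hx
      simp only [Gfun, if_neg (not_le.2 (mem_Ioi.1 hx))]
    have hcont : ContinuousAt (fun x : ℝ => (∫ u in (0:ℝ)..(2*x), K u) / x) s := by
      apply ContinuousAt.div
      · exact (hFcont.comp ((continuous_const.mul continuous_id))).continuousAt
      · exact continuousAt_id
      · exact ne_of_gt h0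
    exact hcont.congr (Filter.eventuallyEq_of_mem (Ioi_mem_nhds h0)
      (fun x hx => (heq x hx).symm))



def interp (b : ℕ → ℝ) (s : ℝ) : ℝ :=
  b ⌊s⌋₊ + (s - ⌊s⌋₊) * (b (⌊s⌋₊ + 1) - b ⌊s⌋₊)

def affA (b : ℕ → ℝ) (n : ℕ) (s : ℝ) : ℝ := b n + (s - n) * (b (n + 1) - b n)

lemma interp_natCast (b : ℕ → ℝ) (n : ℕ) : interp b (n : ℝ) = b n := by
  simp [interp, Nat.floor_natCast]

lemma interp_eq_affA (b : ℕ → ℝ) {n : ℕ} {s : ℝ} (h1 : (n : ℝ) ≤ s)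
    (h2 : s < (n : ℝ) + 1) : interp b s = affA b n s := by
  have : ⌊s⌋₊ = n := by
    rw [Nat.floor_eq_iff ((Nat.cast_nonneg n).trans h1)]
    exact ⟨by exact_mod_cast h1, by exact_mod_cast h2⟩
  simp [interp, affA, this]

lemma interp_pos {b : ℕ → ℝ} (hb : ∀ n, 0 < b n) {s : ℝ} (hs : 0 ≤ s) :
    0 < interp b s := by
  set n := ⌊s⌋₊ with hn
  have h1 : (n : ℝ) ≤ s := Nat.floor_le hs
  have h2 : s < (n : ℝ) + 1 := Nat.lt_floor_add_one s
  have e1 := hb n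
  have e2 := hb (n + 1)
  unfold interp
  rw [← hn]
  nlinarith [mul_nonneg (sub_nonneg.2 h1) e2.le, mul_pos (sub_pos.2 h2) e1]

lemma interp_continuous (b : ℕ → ℝ) : Continuous (interp b) := by
  rw [continuous_iff_continuousAt]
  intro s
  rcases lt_or_ge s 1 with hs1 | hs1
  · -- on Iio 1, interp = affA b 0
    have heq : ∀ x ∈ Iio (1:ℝ), interp b x = affA b 0 x := by
      intro x hx
      have : ⌊x⌋₊ = 0 := Nat.floor_eq_zero.2 hx
      simp [interp, affA, this]
    have hc : ContinuousAt (affA b 0) s := by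
      unfold affA; fun_prop
    exact hc.congr (Filter.eventuallyEq_of_mem (Iio_mem_nhds hs1)
      (fun x hx => (heq x hx).symm))
  · set n := ⌊s⌋₊ with hn
    have hfl : (n : ℝ) ≤ s := Nat.floor_le (by linarith)
    have hfl2 : s < (n : ℝ) + 1 := Nat.lt_floor_add_one s
    have hn1 : 1 ≤ n := by
      rw [hn]
      exact (Nat.one_le_floor_iff _).2 hs1
    clear_value n
    rcases eq_or_lt_of_le hfl with heq | hlt
    · -- s = n, an integer ≥ 1
      obtain ⟨m, rfl⟩ : ∃ m, n = m + 1 := ⟨n - 1, (Nat.succ_pred_eq_of_pos hn1).symm⟩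
      -- left continuity within Iic s, right within Ici s
      have hL : ContinuousWithinAt (interp b) (Iic s) s := by
        have hset : Ioc ((m : ℝ)) s ∈ 𝓝[Iic s] s := by
          rw [← Iic_inter_Ioi]
          exact inter_mem_nhdsWithin _ (Ioi_mem_nhds (by
            rw [← heq]; push_cast; linarith))
        have heqf : ∀ x ∈ Ioc ((m : ℝ)) s, interp b x = affA b m x := by
          intro x hx
          rcases eq_or_lt_of_le hx.2 with hxe | hxl
          · rw [hxe, ← heq, interp_natCast]
            unfold affA; push_cast; ring
          · apply interp_eq_affA b hx.1.le
            rw [← heq] at hxl; push_cast at hxl ⊢; linarith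
        have hc : ContinuousWithinAt (affA b m) (Iic s) s := by
          apply Continuous.continuousWithinAt; unfold affA; fun_prop
        exact hc.congr_of_eventuallyEq
          (Filter.eventuallyEq_of_mem hset (fun x hx => (heqf x hx)))
          (by
            rw [← heq, interp_natCast]; unfold affA; push_cast; ring)
      have hR : ContinuousWithinAt (interp b) (Ici s) s := by
        have hset : Ico s ((m : ℝ) + 2) ∈ 𝓝[Ici s] s := by
          rw [← Ici_inter_Iio]
          exact inter_mem_nhdsWithin _ (Iio_mem_nhds (by
            rw [← heq]; push_cast; linarith))
        have heqf : ∀ x ∈ Ico s ((m : ℝ) + 2), interp b x = affA b (m + 1) x := by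
          intro x hx
          apply interp_eq_affA b (by rw [← heq] at hx; push_cast at hx ⊢; linarith [hx.1])
          push_cast
          linarith [hx.2]
        have hc : ContinuousWithinAt (affA b (m + 1)) (Ici s) s := by
          apply Continuous.continuousWithinAt; unfold affA; fun_prop
        exact hc.congr_of_eventuallyEq
          (Filter.eventuallyEq_of_mem hset (fun x hx => (heqf x hx)))
          (by
            rw [← heq, interp_natCast]
            unfold affA
            push_cast
            ring)
      have := hL.union hR
      rw [Iic_union_Ici, continuousWithinAt_univ] at this
      exact this
    · -- n < s < n+1 : open interval
      have heqf : ∀ x ∈ Ioo ((n : ℝ)) ((n : ℝ) + 1), interp b x = affA b n x := by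
        intro x hx
        exact interp_eq_affA b hx.1.le hx.2
      have hc : ContinuousAt (affA b n) s := by unfold affA; fun_prop
      exact hc.congr (Filter.eventuallyEq_of_mem
        (Ioo_mem_nhds hlt hfl2) (fun x hx => (heqf x hx).symm))



end A2A1

section Main

open A2A1

/-- Hypothesis (A2) implies hypothesis (A1). -/
theorem a2_implies_a1 {X U D : Type*}
    [NormedAddCommGroup X] [NormedSpace ℝ X] [NormedAddCommGroup U] [NormedSpace ℝ U]
    [Nonempty D]
    (f : ℕ → D → X → U → X)
    (hf0 : ∀ (t : ℕ) (d : D), f t d 0 0 = 0)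
    (hA2 : ∀ (T : ℕ) (S : Set (X × U)), Bornology.IsBounded S → ∀ ε > (0 : ℝ),
      Bornology.IsBounded {y : X | ∃ t ≤ T, ∃ d : D, ∃ p ∈ S, y = f t d p.1 p.2} ∧
      ∃ δ > (0 : ℝ), ∀ t ≤ T, ∀ p ∈ S, ∀ p₀ ∈ S,
        ‖p.1 - p₀.1‖ + ‖p.2 - p₀.2‖ < δ →
        ∀ d : D, ‖f t d p.1 p.2 - f t d p₀.1 p₀.2‖ < ε) :
    (∃ ζ β : ℝ → ℝ, IsKInf ζ ∧ IsKPlus β ∧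
      ∀ (t : ℕ) (d : D) (x : X) (u : U),
        ‖f t d x u‖ ≤ ζ (β t * max ‖x‖ ‖u‖)) ∧
    (∃ a β : ℝ → ℝ, IsKInf a ∧ IsKPlus β ∧
      ∀ (t : ℕ) (d : D) (x : X) (u : U),
        ‖f t d x u‖ ≤ a (β t * ‖x‖) + a (β t * ‖u‖)) := by
  -- Step 1 : small-radius bounds
  have hδ : ∀ t k : ℕ, ∃ δ : ℝ, 0 < δ ∧ δ ≤ 1 ∧ ∀ (d : D) (x : X) (u : U),
      ‖x‖ ≤ δ → ‖u‖ ≤ δ → ‖f t d x u‖ ≤ (2⁻¹ : ℝ)^(t+k) := by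
    intro t k
    have hS : IsBounded {p : X × U | ‖p.1‖ ≤ 1 ∧ ‖p.2‖ ≤ 1} := by
      rw [isBounded_iff_forall_norm_le]
      refine ⟨1, fun p hp => ?_⟩
      rw [Prod.norm_def]
      exact max_le hp.1 hp.2
    have hε : (0:ℝ) < (2⁻¹ : ℝ)^(t+k) := by positivity
    obtain ⟨-, δ, hδpos, hprop⟩ := hA2 t _ hS _ hε
    refine ⟨min (δ/3) 1, by positivity, min_le_right _ _, ?_⟩
    intro d x u hx hu
    have h1 : ‖x‖ ≤ 1 := le_trans hx (min_le_right _ _)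
    have h2 : ‖u‖ ≤ 1 := le_trans hu (min_le_right _ _)
    have hd : ‖x - (0:X)‖ + ‖u - (0:U)‖ < δ := by
      rw [sub_zero, sub_zero]
      have hx3 : ‖x‖ ≤ δ/3 := le_trans hx (min_le_left _ _)
      have hu3 : ‖u‖ ≤ δ/3 := le_trans hu (min_le_left _ _)
      linarith
    have := hprop t le_rfl (x, u) ⟨h1, h2⟩ (0, 0) ⟨by simp, by simp⟩ hd d
    simp only [hf0, sub_zero] at this
    exact this.le
  choose δ₀ hδ₀pos hδ₀le1 hδ₀spec using hδ
  -- Step 2 : large-scale bounds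
  have hBex : ∀ n : ℕ, ∃ R : ℝ, ∀ t ≤ n, ∀ (d : D) (x : X) (u : U),
      ‖x‖ ≤ (n:ℝ)+1 → ‖u‖ ≤ (n:ℝ)+1 → ‖f t d x u‖ ≤ R := by
    intro n
    have hS : IsBounded {p : X × U | ‖p.1‖ ≤ (n:ℝ)+1 ∧ ‖p.2‖ ≤ (n:ℝ)+1} := by
      rw [isBounded_iff_forall_norm_le]
      refine ⟨(n:ℝ)+1, fun p hp => ?_⟩
      rw [Prod.norm_def]
      exact max_le hp.1 hp.2
    obtain ⟨hbd, -⟩ := hA2 n _ hS 1 one_pos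
    rw [isBounded_iff_forall_norm_le] at hbd
    obtain ⟨R, hR⟩ := hbd
    exact ⟨R, fun t ht d x u hx hu => hR _ ⟨t, ht, d, (x,u), ⟨hx, hu⟩, rfl⟩⟩
  choose B hBspec using hBex
  -- Step 3 : derived data
  set θ : ℕ → ℕ → ℝ := fun t k => min (δ₀ t k) ((2⁻¹:ℝ)^k) with hθdef
  have hθpos : ∀ t k, 0 < θ t k := fun t k => lt_min (hδ₀pos t k) (by positivity)
  have hθle1 : ∀ t k, θ t k ≤ 1 := fun t k => le_trans (min_le_left _ _) (hδ₀le1 t k)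
  have hθlepow : ∀ t k, θ t k ≤ (2⁻¹:ℝ)^k := fun t k => min_le_right _ _
  have hθδ : ∀ t k, θ t k ≤ δ₀ t k := fun t k => min_le_left _ _
  set B₂ : ℕ → ℝ := fun n => ∑ j ∈ Finset.range (n+1), max (B j) 0 with hB₂def
  have hB₂mono : Monotone B₂ := by
    intro a b hab
    apply Finset.sum_le_sum_of_subset_of_nonneg
    · exact Finset.range_subset_range.2 (by omega)
    · exact fun j _ _ => le_max_right _ _
  have hB₂nonneg : ∀ n, 0 ≤ B₂ n :=
    fun n => Finset.sum_nonneg (fun j _ => le_max_right _ _)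
  have hB₂ge : ∀ n, B n ≤ B₂ n := by
    intro n
    refine le_trans (le_max_left (B n) 0) ?_
    exact Finset.single_le_sum (fun j _ => le_max_right (B j) 0)
      (Finset.self_mem_range_succ n)
  set K : ℝ → ℝ := fun v => if v < 1 then 0 else B₂ ⌈v⌉₊ with hKdef
  have hKnonneg : ∀ v, 0 ≤ K v := by
    intro v
    simp only [hKdef]
    split_ifs
    · exact le_refl _
    · exact hB₂nonneg _
  have hKmono : Monotone K := by
    intro v w hvw
    simp only [hKdef]
    split_ifs with hv hw hw
    · exact le_refl _
    · exact hB₂nonneg _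
    · exact absurd (lt_of_le_of_lt hvw hw) hv
    · exact hB₂mono (Nat.ceil_le_ceil hvw)
  have hK1 : ∀ v, v < 1 → K v = 0 := by
    intro v hv
    simp only [hKdef, if_pos hv]
  set c : ℕ × ℕ → ℝ := fun p => (2⁻¹:ℝ)^p.1 * (2⁻¹:ℝ)^p.2 with hcdef
  have hcnonneg : ∀ p, 0 ≤ c p := fun p => by positivity
  have hcsum : Summable c := by
    apply Summable.mul_of_nonneg (summable_geometric_of_lt_one (by norm_num) (by norm_num))
      (summable_geometric_of_lt_one (by norm_num) (by norm_num))
    · exact fun n => by positivity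
    · exact fun n => by positivity
  set q : ℕ × ℕ → ℝ := fun p => θ p.1 (p.2 + 1) / θ p.1 p.1 with hqdef
  have hqpos : ∀ p, 0 < q p := fun p => div_pos (hθpos _ _) (hθpos _ _)
  set b : ℕ → ℝ := fun t => max (t:ℝ) 1 / θ t t with hbdef
  have hbpos : ∀ t, 0 < b t := fun t => div_pos (lt_of_lt_of_le one_pos (le_max_right _ _))
    (hθpos t t)
  have hbθ : ∀ t, b t * θ t t = max (t:ℝ) 1 := fun t =>
    div_mul_cancel₀ _ (ne_of_gt (hθpos t t))
  have hbge1 : ∀ t, 1 ≤ b t := by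
    intro t
    rw [hbdef]
    rw [le_div_iff₀ (hθpos t t), one_mul]
    exact le_trans (hθle1 t t) (le_max_right _ _)
  -- the two gain functions
  set ζ : ℝ → ℝ := fun s => s + Tfun c q s + Gfun K s with hζdef
  set β : ℝ → ℝ := interp b with hβdef
  have hζ0 : ζ 0 = 0 := by
    simp only [hζdef, Tfun_zero, Gfun, if_pos (le_refl (0:ℝ))]
    ring
  have hζnonneg : ∀ s, 0 ≤ s → 0 ≤ ζ s := by
    intro s hs
    have h1 := Tfun_nonneg hcnonneg hqpos s
    have h2 := Gfun_nonneg hKnonneg s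
    simp only [hζdef]
    linarith
  have hζKInf : IsKInf ζ := by
    refine ⟨?_, ?_, hζ0, ?_⟩
    · apply ContinuousOn.add
      · exact (continuous_id.add (Tfun_continuous hcnonneg hqpos hcsum)).continuousOn
      · exact Gfun_continuousOn hKmono hK1
    · intro a ha a' ha' haa'
      have h1 := Tfun_mono hcnonneg hqpos hcsum haa'.le
      have h2 := Gfun_mono hKmono hKnonneg ha ha' haa'.le
      simp only [hζdef]
      linarith
    · apply tendsto_atTop_mono' _ _ tendsto_id
      filter_upwards [eventually_ge_atTop (0:ℝ)] with s hs
      have h1 := Tfun_nonneg hcnonneg hqpos s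
      have h2 := Gfun_nonneg hKnonneg s
      simp only [hζdef, id]
      linarith
  have hβKPlus : IsKPlus β := by
    refine ⟨(interp_continuous b).continuousOn, fun s hs => interp_pos hbpos hs⟩
  have hβnat : ∀ t : ℕ, β (t:ℝ) = b t := fun t => interp_natCast b t
  -- the key estimate
  have key : ∀ (t : ℕ) (d : D) (x : X) (u : U),
      ‖f t d x u‖ ≤ ζ (β t * max ‖x‖ ‖u‖) := by
    intro t d x u
    set m : ℝ := max ‖x‖ ‖u‖ with hmdef
    have hm0 : 0 ≤ m := le_trans (norm_nonneg x) (le_max_left _ _)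
    have hxm : ‖x‖ ≤ m := le_max_left _ _
    have hum : ‖u‖ ≤ m := le_max_right _ _
    rw [hβnat t]
    rcases eq_or_lt_of_le hm0 with hm | hm
    · -- m = 0
      have hx0 : x = 0 := norm_le_zero_iff.1 (by rw [hm]; exact hxm)
      have hu0 : u = 0 := norm_le_zero_iff.1 (by rw [hm]; exact hum)
      rw [hx0, hu0, hf0, ← hm, mul_zero, hζ0, norm_zero]
    · rcases le_or_gt (θ t t) m with hcase | hcase
      · -- large m
        set s : ℝ := b t * m with hsdef
        have hmax : max (t:ℝ) 1 ≤ s := by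
          rw [hsdef, ← hbθ t]
          exact mul_le_mul_of_nonneg_left hcase (hbpos t).le
        have hts : (t:ℝ) ≤ s := le_trans (le_max_left _ _) hmax
        have hs1 : (1:ℝ) ≤ s := le_trans (le_max_right _ _) hmax
        have hms : m ≤ s := by
          rw [hsdef]
          nlinarith [hbge1 t]
        have hceil : s ≤ (⌈s⌉₊ : ℝ) := Nat.le_ceil s
        have htceil : t ≤ ⌈s⌉₊ := by exact_mod_cast le_trans hts hceil
        have hfb : ‖f t d x u‖ ≤ B₂ ⌈s⌉₊ := by
          refine le_trans (hBspec ⌈s⌉₊ t htceil d x u ?_ ?_) (hB₂ge _)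
          · linarith
          · linarith
        have hKs : K s = B₂ ⌈s⌉₊ := by
          simp only [hKdef, if_neg (not_lt.2 hs1)]
        have hGs : K s ≤ Gfun K s := Gfun_ge hKmono hKnonneg (by linarith : (0:ℝ) < s)
        have hT := Tfun_nonneg hcnonneg hqpos s
        simp only [hζdef]
        linarith [hfb, hKs ▸ hGs, hT, hs1]
      · -- small m
        have htS : t ∈ {j : ℕ | m ≤ θ t j} := le_of_lt hcase
        have hbdd : BddAbove {j : ℕ | m ≤ θ t j} := by
          obtain ⟨N, hN⟩ := exists_pow_lt_of_lt_one hm (by norm_num : (2⁻¹:ℝ) < 1)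
          refine ⟨N, fun j hj => ?_⟩
          by_contra hcon
          push_neg at hcon
          have h1 : (2⁻¹:ℝ)^j ≤ (2⁻¹:ℝ)^N :=
            pow_le_pow_of_le_one (by norm_num) (by norm_num) hcon.le
          have h2 : m ≤ (2⁻¹:ℝ)^j := le_trans hj (hθlepow t j)
          linarith
        set k : ℕ := sSup {j : ℕ | m ≤ θ t j} with hkdef
        have hkS : m ≤ θ t k := Nat.sSup_mem ⟨t, htS⟩ hbdd
        have htk : t ≤ k := le_csSup hbdd htS
        have hk1 : θ t (k+1) < m := by
          by_contra hcon
          push_neg at hcon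
          have : k + 1 ≤ k := le_csSup hbdd hcon
          omega
        have hfb : ‖f t d x u‖ ≤ (2⁻¹:ℝ)^(t+k) :=
          hδ₀spec t k d x u (le_trans hxm (le_trans hkS (hθδ t k)))
            (le_trans hum (le_trans hkS (hθδ t k)))
        have hqle : q (t, k) ≤ b t * m := by
          rw [hqdef]
          dsimp only
          rw [div_le_iff₀ (hθpos t t)]
          have h1 : 1 ≤ b t * θ t t := by
            rw [hbθ t]; exact le_max_right _ _
          nlinarith [hθpos t t, hbpos t]
        have hTle : c (t, k) ≤ Tfun c q (b t * m) := le_Tfun hcnonneg hqpos hcsum (t, k) hqle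
        have hceq : c (t, k) = (2⁻¹:ℝ)^(t+k) := by
          rw [hcdef]; dsimp only; rw [pow_add]
        have hG := Gfun_nonneg hKnonneg (b t * m)
        have hbm : 0 ≤ b t * m := mul_nonneg (hbpos t).le hm.le
        simp only [hζdef]
        linarith [hceq ▸ hTle]
  refine ⟨⟨ζ, β, hζKInf, hβKPlus, key⟩, ⟨ζ, β, hζKInf, hβKPlus, ?_⟩⟩
  intro t d x u
  have hβpos : 0 < β t := interp_pos hbpos (Nat.cast_nonneg t)
  rcases le_total ‖u‖ ‖x‖ with hc | hc
  · have hmax : max ‖x‖ ‖u‖ = ‖x‖ := max_eq_left hc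
    have h2 : 0 ≤ ζ (β t * ‖u‖) := hζnonneg _ (by positivity)
    have h1 := key t d x u
    rw [hmax] at h1
    linarith
  · have hmax : max ‖x‖ ‖u‖ = ‖u‖ := max_eq_right hc
    have h2 : 0 ≤ ζ (β t * ‖x‖) := hζnonneg _ (by positivity)
    have h1 := key t d x u
    rw [hmax] at h1
    linarith

end Main
end
end

section
/- Proposition 3.2, (i) ⇒ (ii). Suppose system (1.2) satisfies hypotheses (A1) and (H2) and satisfies the non-uniform in time IOS property. Then there exist functions ζ ∈ K∞, β, δ ∈ K⁺ and σ ∈ KL such that for every t₀ ∈ ℕ, x₀ ∈ X, d : ℕ → D, u : ℕ → U, the corresponding solution x(·) of (1.2) with x(t₀) = x₀ satisfies ‖H(t, x(t))‖_Y ≤ max{ σ(β(t₀)‖x₀‖_X, t − t₀), sup_{t₀ ≤ τ ≤ t} ζ(δ(τ)‖u(τ)‖_U) } for all t ≥ t₀. -/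
open Filter Topology Bornology Set

noncomputable section

namespace Prop32Aux


def clamp (x : ℝ) : ℝ := max 0 (min x 1)

lemma clamp_nonneg (x : ℝ) : 0 ≤ clamp x := le_max_left _ _

lemma clamp_mono : Monotone clamp :=
  fun _ _ h => max_le_max le_rfl (min_le_min h le_rfl)

lemma clamp_continuous : Continuous clamp :=
  continuous_const.max (continuous_id.min continuous_const)

lemma clamp_of_nonpos {x : ℝ} (h : x ≤ 0) : clamp x = 0 :=
  max_eq_left (le_trans (min_le_left _ _) h)

lemma clamp_of_one_le {x : ℝ} (h : 1 ≤ x) : clamp x = 1 := by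
  rw [clamp, min_eq_right h, max_eq_right zero_le_one]

def ramp (c : ℕ → ℝ) (t : ℝ) : ℝ := ∑' n, c n * clamp (t - n)

lemma ramp_summable (c : ℕ → ℝ) (t : ℝ) : Summable (fun n => c n * clamp (t - n)) := by
  apply summable_of_ne_finset_zero (s := Finset.range (⌈t⌉₊ + 1))
  intro n hn
  rw [Finset.mem_range, not_lt] at hn
  have h1 : t - n ≤ 0 := by
    have h2 : t ≤ (⌈t⌉₊ : ℝ) := Nat.le_ceil t
    have h3 : ((⌈t⌉₊ + 1 : ℕ) : ℝ) ≤ n := Nat.cast_le.mpr hn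
    push_cast at h3
    linarith
  rw [clamp_of_nonpos h1, mul_zero]

lemma ramp_nonneg (c : ℕ → ℝ) (hc : ∀ n, 0 ≤ c n) (t : ℝ) : 0 ≤ ramp c t :=
  tsum_nonneg fun n => mul_nonneg (hc n) (clamp_nonneg _)

lemma ramp_mono (c : ℕ → ℝ) (hc : ∀ n, 0 ≤ c n) : Monotone (ramp c) := by
  intro a b hab
  exact Summable.tsum_le_tsum
    (fun n => mul_le_mul_of_nonneg_left (clamp_mono (by linarith)) (hc n))
    (ramp_summable c a) (ramp_summable c b)

lemma sum_le_ramp (c : ℕ → ℝ) (hc : ∀ n, 0 ≤ c n) {N : ℕ} {t : ℝ} (h : (N : ℝ) ≤ t) :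
    ∑ n ∈ Finset.range N, c n ≤ ramp c t := by
  have h1 : ∑ n ∈ Finset.range N, c n * clamp (t - n) ≤ ramp c t :=
    Summable.sum_le_tsum _ (fun n _ => mul_nonneg (hc n) (clamp_nonneg _)) (ramp_summable c t)
  refine le_trans (le_of_eq ?_) h1
  refine Finset.sum_congr rfl fun n hn => ?_
  have hn' := Finset.mem_range.mp hn
  have : 1 ≤ t - n := by
    have : (n : ℝ) + 1 ≤ N := by exact_mod_cast hn'
    linarith
  rw [clamp_of_one_le this, mul_one]

lemma ramp_continuous (c : ℕ → ℝ) : Continuous (ramp c) := by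
  rw [continuous_iff_continuousAt]
  intro t₀
  set N := ⌈t₀⌉₊ + 1 with hN
  have hsum : Continuous fun t : ℝ => ∑ n ∈ Finset.range N, c n * clamp (t - n) := by
    exact continuous_finset_sum _ fun n _ =>
      continuous_const.mul (clamp_continuous.comp (continuous_id.sub continuous_const))
  refine hsum.continuousAt.congr ?_
  have hmem : Set.Iio (N : ℝ) ∈ 𝓝 t₀ := Iio_mem_nhds (by
    have := Nat.le_ceil t₀
    push_cast [hN]; linarith)
  have heq : (fun t => ∑ n ∈ Finset.range N, c n * clamp (t - n)) =ᶠ[𝓝 t₀] ramp c := by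
    filter_upwards [hmem] with t ht
    refine (tsum_eq_sum fun n hn => ?_).symm
    rw [Finset.mem_range, not_lt] at hn
    rw [Set.mem_Iio] at ht
    have h1 : t - n ≤ 0 := by
      have h2 : (N : ℝ) ≤ n := by exact_mod_cast hn
      linarith
    rw [clamp_of_nonpos h1, mul_zero]
  exact heq

/-- Key construction: a single `K∞` function `ζ` and gains `δf` dominating a countable
family of class-`K` functions. -/
lemma key_construction (κ : ℕ → ℝ → ℝ)
    (hcont : ∀ n, ContinuousOn (κ n) (Set.Ici 0))
    (hmono : ∀ n, MonotoneOn (κ n) (Set.Ici 0))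
    (hzero : ∀ n, κ n 0 = 0)
    (hnn : ∀ n s, 0 ≤ s → 0 ≤ κ n s) :
    ∃ ζ δf : ℝ → ℝ, IsKInf ζ ∧ IsKPlus δf ∧
      ∀ (n : ℕ) (s : ℝ), 0 ≤ s → κ n s ≤ ζ (δf n * s) := by
  -- choose small thresholds B n
  have hB : ∀ n : ℕ, ∃ b : ℝ, 0 < b ∧ κ n b ≤ (1/2 : ℝ) ^ n := by
    intro n
    have h0 : ContinuousWithinAt (κ n) (Set.Ici 0) 0 :=
      hcont n 0 (Set.self_mem_Ici)
    have h1 : Tendsto (κ n) (𝓝[Set.Ici 0] 0) (𝓝 0) := by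
      simpa [ContinuousWithinAt, hzero n] using h0
    have h2 : (κ n) ⁻¹' (Set.Iio ((1/2 : ℝ) ^ n)) ∈ 𝓝[Set.Ici 0] 0 :=
      h1 (Iio_mem_nhds (by positivity))
    rw [Metric.mem_nhdsWithin_iff] at h2
    obtain ⟨ε, hε, hsub⟩ := h2
    refine ⟨ε / 2, by positivity, ?_⟩
    have hmem : ε / 2 ∈ Metric.ball (0:ℝ) ε ∩ Set.Ici 0 := by
      constructor
      · rw [Metric.mem_ball, Real.dist_eq, sub_zero,
          abs_of_pos (by positivity : (0:ℝ) < ε / 2)]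
        linarith
      · exact Set.mem_Ici.mpr (by positivity)
    exact (hsub hmem).le
  choose B hBpos hBsmall using hB
  set d : ℕ → ℝ := fun n => 1 + ((n : ℝ) + 2) / B n with hd_def
  have hd1 : ∀ n, 1 ≤ d n := fun n => le_add_of_nonneg_right (div_nonneg (by positivity) (hBpos n).le)
  have hd0 : ∀ n, 0 ≤ d n := fun n => le_trans zero_le_one (hd1 n)
  set K : ℕ → ℝ := fun m => ∑ j ∈ Finset.range (m + 1), κ j m with hK_def
  have hK0 : ∀ m, 0 ≤ K m :=
    fun m => Finset.sum_nonneg fun j _ => hnn j m (Nat.cast_nonneg m)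
  -- the bounded part G
  set g : ℕ → ℝ → ℝ := fun n r => κ n (min (max r 0) (B n)) with hg_def
  have hg_arg_mem : ∀ n r, min (max r 0) (B n) ∈ Set.Ici (0:ℝ) := by
    intro n r
    exact le_min (le_max_right _ _) (hBpos n).le
  have hg_nonneg : ∀ n r, 0 ≤ g n r := fun n r => hnn n _ (hg_arg_mem n r)
  have hg_le : ∀ n r, g n r ≤ (1/2 : ℝ) ^ n := by
    intro n r
    exact le_trans (hmono n (hg_arg_mem n r) (Set.mem_Ici.mpr (hBpos n).le)
      (min_le_right _ _)) (hBsmall n)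
  have hg_cont : ∀ n, Continuous (g n) := by
    intro n
    refine (hcont n).comp_continuous ?_ (hg_arg_mem n)
    exact (continuous_id.max continuous_const).min continuous_const
  have hsum_half : Summable (fun n : ℕ => (1/2 : ℝ) ^ n) :=
    summable_geometric_of_lt_one (by norm_num) (by norm_num)
  have hGsummable : ∀ r, Summable (fun n => g n r) := by
    intro r
    exact Summable.of_nonneg_of_le (fun n => hg_nonneg n r) (fun n => hg_le n r) hsum_half
  set G : ℝ → ℝ := fun r => ∑' n, g n r with hG_def
  have hGcont : Continuous G := by
    refine continuous_tsum hg_cont hsum_half ?_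
    intro n r
    rw [Real.norm_eq_abs, abs_of_nonneg (hg_nonneg n r)]
    exact hg_le n r
  have hGmono : Monotone G := by
    intro a b hab
    refine Summable.tsum_le_tsum (fun n => ?_) (hGsummable a) (hGsummable b)
    exact hmono n (hg_arg_mem n a) (hg_arg_mem n b)
      (min_le_min (max_le_max hab le_rfl) le_rfl)
  have hGnonneg : ∀ r, 0 ≤ G r := fun r => tsum_nonneg fun n => hg_nonneg n r
  have hG0 : G 0 = 0 := by
    have : ∀ n, g n 0 = 0 := by
      intro n
      have : min (max (0:ℝ) 0) (B n) = 0 := by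
        rw [max_self, min_eq_left (hBpos n).le]
      rw [hg_def]; simp only; rw [this, hzero n]
    simp only [hG_def, this, tsum_zero]
  -- Φ part
  set Φ : ℝ → ℝ := fun r => ramp K r with hΦ_def
  have hΦ0 : Φ 0 = 0 := by
    rw [hΦ_def]; simp only [ramp]
    have : ∀ n : ℕ, K n * clamp (0 - n) = 0 := by
      intro n
      rw [clamp_of_nonpos (by simp [Nat.cast_nonneg] : (0:ℝ) - n ≤ 0), mul_zero]
    simp only [this, tsum_zero]
  -- ζ and δf
  set ζ : ℝ → ℝ := fun r => r + G r + Φ r with hζ_def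
  set δf : ℝ → ℝ := fun t => 1 + ramp d (t + 1) with hδf_def
  have hζmono : StrictMono ζ := by
    intro a b hab
    have h1 := hGmono hab.le
    have h2 : Φ a ≤ Φ b := ramp_mono K hK0 hab.le
    show a + G a + Φ a < b + G b + Φ b
    linarith
  have hζcont : Continuous ζ := by
    exact (continuous_id.add hGcont).add (ramp_continuous K)
  have hζ0 : ζ 0 = 0 := by
    show (0:ℝ) + G 0 + Φ 0 = 0
    rw [hG0, hΦ0]; ring
  have hΦnonneg : ∀ r, 0 ≤ Φ r := fun r => ramp_nonneg K hK0 r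
  have hζtop : Tendsto ζ atTop atTop := by
    refine tendsto_atTop_mono' atTop ?_ tendsto_id
    filter_upwards [eventually_ge_atTop (0:ℝ)] with r hr
    show r ≤ r + G r + Φ r
    have := hGnonneg r
    have := hΦnonneg r
    linarith
  have hζKInf : IsKInf ζ :=
    ⟨hζcont.continuousOn, hζmono.strictMonoOn _, hζ0, hζtop⟩
  have hδfKPlus : IsKPlus δf := by
    constructor
    · exact (continuous_const.add
        ((ramp_continuous d).comp (continuous_id.add continuous_const))).continuousOn
    · intro t _
      have := ramp_nonneg d hd0 (t + 1)
      show (0:ℝ) < 1 + ramp d (t + 1)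
      linarith
  refine ⟨ζ, δf, hζKInf, hδfKPlus, ?_⟩
  -- δf dominates d on naturals
  have hdle : ∀ n : ℕ, d n ≤ δf n := by
    intro n
    have h1 : ∑ j ∈ Finset.range (n + 1), d j ≤ ramp d ((n : ℝ) + 1) :=
      sum_le_ramp d hd0 (by push_cast; linarith)
    have h2 : d n ≤ ∑ j ∈ Finset.range (n + 1), d j :=
      Finset.single_le_sum (fun j _ => hd0 j) (Finset.mem_range.mpr (Nat.lt_succ_self n))
    show d n ≤ 1 + ramp d ((n:ℝ) + 1)
    linarith
  intro n s hs
  -- reduce to d n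
  have hds : d n * s ≤ δf n * s := mul_le_mul_of_nonneg_right (hdle n) hs
  refine le_trans ?_ (hζmono.monotone hds)
  have hdns : 0 ≤ d n * s := mul_nonneg (hd0 n) hs
  rcases le_or_gt s (B n) with hsB | hBs
  · -- small regime: use G
    have hsle : s ≤ min (max (d n * s) 0) (B n) := by
      refine le_min (le_trans ?_ (le_max_left _ _)) hsB
      exact le_mul_of_one_le_left hs (hd1 n)
    have h1 : κ n s ≤ g n (d n * s) :=
      hmono n (Set.mem_Ici.mpr hs) (hg_arg_mem n _) hsle
    have h2 : g n (d n * s) ≤ G (d n * s) :=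
      Summable.le_tsum (hGsummable (d n * s)) n (fun j _ => hg_nonneg j _)
    have h3 := hΦnonneg (d n * s)
    show κ n s ≤ d n * s + G (d n * s) + Φ (d n * s)
    linarith
  · -- large regime: use Φ
    set M := n + ⌈s⌉₊ with hM_def
    have hceil : s ≤ (⌈s⌉₊ : ℝ) := Nat.le_ceil s
    have hceil2 : (⌈s⌉₊ : ℝ) < s + 1 := Nat.ceil_lt_add_one hs
    have hsM : s ≤ (M : ℝ) := by
      rw [hM_def]; push_cast; linarith [show (0:ℝ) ≤ (n:ℝ) from Nat.cast_nonneg n]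
    have h1 : κ n s ≤ κ n M :=
      hmono n (Set.mem_Ici.mpr hs) (Set.mem_Ici.mpr (Nat.cast_nonneg M)) hsM
    have h2 : κ n M ≤ K M :=
      Finset.single_le_sum (fun j _ => hnn j M (Nat.cast_nonneg M))
        (Finset.mem_range.mpr (by omega : n < M + 1))
    have h3 : K M ≤ ∑ j ∈ Finset.range (M + 1), K j :=
      Finset.single_le_sum (fun j _ => hK0 j) (Finset.mem_range.mpr (Nat.lt_succ_self M))
    have hNle : ((M + 1 : ℕ) : ℝ) ≤ d n * s := by
      have e1 : ((n:ℝ) + 2) ≤ ((n:ℝ) + 2) / B n * s := by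
        have e2 : ((n:ℝ) + 2) / B n * B n ≤ ((n:ℝ) + 2) / B n * s :=
          mul_le_mul_of_nonneg_left hBs.le (div_nonneg (by positivity) (hBpos n).le)
        rwa [div_mul_cancel₀ _ (ne_of_gt (hBpos n))] at e2
      have e3 : d n * s = s + ((n:ℝ) + 2) / B n * s := by rw [hd_def]; ring
      push_cast
      rw [e3, hM_def]
      push_cast
      linarith
    have h4 : ∑ j ∈ Finset.range (M + 1), K j ≤ Φ (d n * s) :=
      sum_le_ramp K hK0 hNle
    have h5 := hGnonneg (d n * s)
    show κ n s ≤ d n * s + G (d n * s) + Φ (d n * s)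
    linarith

end Prop32Aux

/-- Proposition 3.2, (i) ⇒ (ii). -/
theorem prop32_i_implies_ii {X Y U D : Type*}
    [NormedAddCommGroup X] [NormedSpace ℝ X] [NormedAddCommGroup Y] [NormedSpace ℝ Y]
    [NormedAddCommGroup U] [NormedSpace ℝ U] [Nonempty D]
    (f : ℕ → D → X → U → X) (H : ℕ → X → Y)
    (hf0 : ∀ (t : ℕ) (d : D), f t d 0 0 = 0) (hH0 : ∀ t : ℕ, H t 0 = 0)
    (hA1 : ∃ a β : ℝ → ℝ, IsKInf a ∧ IsKPlus β ∧
      ∀ (t : ℕ) (d : D) (x : X) (u : U),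
        ‖f t d x u‖ ≤ a (β t * ‖x‖) + a (β t * ‖u‖))
    (hH2 : ∀ (T : ℕ) (S : Set X), Bornology.IsBounded S → ∀ ε > (0 : ℝ),
      Bornology.IsBounded {y : Y | ∃ t ≤ T, ∃ x ∈ S, y = H t x} ∧
      ∃ δ > (0 : ℝ), ∀ t ≤ T, ∀ x ∈ S, ∀ x₀ ∈ S, ‖x - x₀‖ < δ → ‖H t x - H t x₀‖ < ε)
    (hIOS : ∃ (σ : ℝ → ℝ → ℝ) (β γ ρ : ℝ → ℝ),
      IsKL σ ∧ IsKPlus β ∧ IsKPlus γ ∧ IsKInf ρ ∧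
      ∀ (d : ℕ → D) (u : ℕ → U) (t₀ : ℕ) (x₀ : X) (x : ℕ → X),
        x t₀ = x₀ → (∀ t, t₀ ≤ t → x (t + 1) = f t (d t) (x t) (u t)) →
        ∀ t, t₀ ≤ t →
          ‖H t (x t)‖ ≤ max (σ (β t₀ * ‖x₀‖) ((t : ℝ) - (t₀ : ℝ)))
            (⨆ τ ∈ Set.Icc t₀ t, σ (β τ * ρ (γ τ * ‖u τ‖)) ((t : ℝ) - (τ : ℝ)))) :
    ∃ (ζ : ℝ → ℝ) (β δ : ℝ → ℝ) (σ : ℝ → ℝ → ℝ),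
      IsKInf ζ ∧ IsKPlus β ∧ IsKPlus δ ∧ IsKL σ ∧
      ∀ (d : ℕ → D) (u : ℕ → U) (t₀ : ℕ) (x₀ : X) (x : ℕ → X),
        x t₀ = x₀ → (∀ t, t₀ ≤ t → x (t + 1) = f t (d t) (x t) (u t)) →
        ∀ t, t₀ ≤ t →
          ‖H t (x t)‖ ≤ max (σ (β t₀ * ‖x₀‖) ((t : ℝ) - (t₀ : ℝ)))
            (⨆ τ ∈ Set.Icc t₀ t, ζ (δ τ * ‖u τ‖)) := by
  obtain ⟨σ, β, γ, ρ, hσ, hβ, hγ, hρ, hbound⟩ := hIOS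
  obtain ⟨hσcont, hσmono, hσanti⟩ := hσ
  -- basic facts about ρ
  have hρ0 : ρ 0 = 0 := hρ.2.2.1
  have hρnn : ∀ r : ℝ, 0 ≤ r → 0 ≤ ρ r := by
    intro r hr
    rw [← hρ0]
    exact (hρ.2.1.monotoneOn) Set.self_mem_Ici (Set.mem_Ici.mpr hr) hr
  have hσ00 : σ 0 0 = 0 := (hσmono 0 le_rfl).2
  have hσnn : ∀ a : ℝ, 0 ≤ a → 0 ≤ σ a 0 := by
    intro a ha
    have h := (hσmono 0 le_rfl).1.monotoneOn Set.self_mem_Ici (Set.mem_Ici.mpr ha) ha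
    calc (0:ℝ) = σ 0 0 := hσ00.symm
      _ ≤ σ a 0 := h
  -- the family κ
  set κ : ℕ → ℝ → ℝ := fun n s => σ (β n * ρ (γ n * s)) 0 with hκ_def
  have hβpos : ∀ n : ℕ, 0 < β n := fun n => hβ.2 n (Nat.cast_nonneg n)
  have hγpos : ∀ n : ℕ, 0 < γ n := fun n => hγ.2 n (Nat.cast_nonneg n)
  have harg_nn : ∀ (n : ℕ) (s : ℝ), 0 ≤ s → 0 ≤ β n * ρ (γ n * s) := by
    intro n s hs
    exact mul_nonneg (hβpos n).le (hρnn _ (mul_nonneg (hγpos n).le hs))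
  have hκcont : ∀ n, ContinuousOn (κ n) (Set.Ici 0) := by
    intro n
    have h1 : ContinuousOn (fun s : ℝ => ((β n * ρ (γ n * s), 0) : ℝ × ℝ)) (Set.Ici 0) := by
      refine ContinuousOn.prodMk ?_ continuousOn_const
      refine ContinuousOn.mul continuousOn_const ?_
      refine hρ.1.comp (continuousOn_const.mul continuousOn_id) ?_
      intro s hs
      exact Set.mem_Ici.mpr (mul_nonneg (hγpos n).le hs)
    refine hσcont.comp h1 ?_
    intro s hs
    exact Set.mk_mem_prod (Set.mem_Ici.mpr (harg_nn n s hs)) Set.self_mem_Ici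
  have hκmono : ∀ n, MonotoneOn (κ n) (Set.Ici 0) := by
    intro n s hs s' hs' hss
    refine (hσmono 0 le_rfl).1.monotoneOn (Set.mem_Ici.mpr (harg_nn n s hs))
      (Set.mem_Ici.mpr (harg_nn n s' hs')) ?_
    refine mul_le_mul_of_nonneg_left ?_ (hβpos n).le
    refine (hρ.2.1.monotoneOn) (Set.mem_Ici.mpr (mul_nonneg (hγpos n).le hs))
      (Set.mem_Ici.mpr (mul_nonneg (hγpos n).le hs')) ?_
    exact mul_le_mul_of_nonneg_left hss (hγpos n).le
  have hκzero : ∀ n, κ n 0 = 0 := by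
    intro n
    simp only [hκ_def, mul_zero, hρ0, hσ00]
  have hκnn : ∀ n s, 0 ≤ s → 0 ≤ κ n s := fun n s hs => hσnn _ (harg_nn n s hs)
  obtain ⟨ζ, δf, hζ, hδf, hkey⟩ := Prop32Aux.key_construction κ hκcont hκmono hκzero hκnn
  refine ⟨ζ, β, δf, σ, hζ, hβ, hδf, ⟨hσcont, hσmono, hσanti⟩, ?_⟩
  intro d u t₀ x₀ x hx0 hstep t ht
  refine le_trans (hbound d u t₀ x₀ x hx0 hstep t ht) (max_le_max le_rfl ?_)
  -- compare the suprema
  set A : ℕ → ℝ := fun τ => σ (β τ * ρ (γ τ * ‖u τ‖)) ((t : ℝ) - (τ : ℝ)) with hA_def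
  set Bf : ℕ → ℝ := fun τ => ζ (δf τ * ‖u τ‖) with hBf_def
  have hζ0 : ζ 0 = 0 := hζ.2.2.1
  have hBf_nonneg : ∀ τ, 0 ≤ Bf τ := by
    intro τ
    have harg : (0:ℝ) ≤ δf τ * ‖u τ‖ :=
      mul_nonneg (hδf.2 τ (Nat.cast_nonneg τ)).le (norm_nonneg _)
    have := hζ.2.1.monotoneOn Set.self_mem_Ici (Set.mem_Ici.mpr harg) harg
    rw [hζ0] at this
    exact this
  have hAB : ∀ τ ∈ Set.Icc t₀ t, A τ ≤ Bf τ := by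
    intro τ hτ
    have hτt : (τ : ℝ) ≤ (t : ℝ) := Nat.cast_le.mpr hτ.2
    have h1 : A τ ≤ σ (β τ * ρ (γ τ * ‖u τ‖)) 0 := by
      exact (hσanti _ (harg_nn τ _ (norm_nonneg _))).1 Set.self_mem_Ici
        (Set.mem_Ici.mpr (by linarith)) (by linarith)
    exact le_trans h1 (hkey τ ‖u τ‖ (norm_nonneg _))
  have hBdd : BddAbove (Set.range fun τ => ⨆ _ : τ ∈ Set.Icc t₀ t, Bf τ) := by
    have hsub : (Set.range fun τ => ⨆ _ : τ ∈ Set.Icc t₀ t, Bf τ) ⊆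
        insert 0 (Bf '' Set.Icc t₀ t) := by
      rintro y ⟨τ, rfl⟩
      show (⨆ _ : τ ∈ Set.Icc t₀ t, Bf τ) ∈ insert 0 (Bf '' Set.Icc t₀ t)
      by_cases hτ : τ ∈ Set.Icc t₀ t
      · rw [ciSup_pos hτ]
        exact Set.mem_insert_of_mem _ ⟨τ, hτ, rfl⟩
      · haveI : IsEmpty (τ ∈ Set.Icc t₀ t) := ⟨hτ⟩
        rw [Real.iSup_of_isEmpty]
        exact Set.mem_insert _ _
    exact (((Set.finite_Icc t₀ t).image Bf).insert 0).bddAbove.mono hsub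
  refine ciSup_le fun τ => ?_
  by_cases hτ : τ ∈ Set.Icc t₀ t
  · rw [ciSup_pos hτ]
    refine le_trans (hAB τ hτ) ?_
    have heq : (⨆ _ : τ ∈ Set.Icc t₀ t, Bf τ) = Bf τ := ciSup_pos hτ
    exact le_trans (le_of_eq heq.symm) (le_ciSup hBdd τ)
  · haveI : IsEmpty (τ ∈ Set.Icc t₀ t) := ⟨hτ⟩
    rw [Real.iSup_of_isEmpty]
    exact Real.iSup_nonneg fun τ' => Real.iSup_nonneg fun _ => hBf_nonneg τ'
end
end

section
/- Proposition 3.2, (iv) ⇒ (i) (Lyapunov sufficiency for IOS). Suppose system (1.2) satisfies hypotheses (A1) and (H2), and suppose there exist a function V : ℕ × X → [0,∞), functions a₁, a₂, a₃ ∈ K∞, functions β, φ, μ ∈ K⁺ and a constant λ ∈ (0,1) such that: a₁(‖H(t,x)‖_Y + μ(t)‖x‖_X) ≤ V(t,x) ≤ a₂(β(t)‖x‖_X) for all (t,x) ∈ ℕ × X, and V(t+1, f(t,d,x,u)) ≤ λ·V(t,x) + a₃(φ(t)‖u‖_U) for all (t,x,d,u) ∈ ℕ × X × D × U. Then system (1.2)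 satisfies the non-uniform in time IOS property. -/
open Filter Topology Bornology Set

noncomputable section

lemma KInf_nonneg {a : ℝ → ℝ} (ha : IsKInf a) {s : ℝ} (hs : 0 ≤ s) : 0 ≤ a s := by
  have := ha.2.1.monotoneOn self_mem_Ici hs hs
  rw [ha.2.2.1] at this; exact this

lemma KInf_inv {a : ℝ → ℝ} (ha : IsKInf a) :
    ∃ g : ℝ → ℝ, IsKInf g ∧ (∀ r : ℝ, 0 ≤ r → 0 ≤ g r ∧ a (g r) = r) ∧
      (∀ s : ℝ, 0 ≤ s → g (a s) = s) := by
  obtain ⟨hc, hm, h0, htop⟩ := ha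
  have hsurj : ∀ r : ℝ, 0 ≤ r → ∃ s, 0 ≤ s ∧ a s = r := by
    intro r hr
    obtain ⟨b, hb⟩ := (htop.eventually_ge_atTop r).exists_forall_of_atTop
    have hb0 : (0:ℝ) ≤ max b 0 := le_max_right _ _
    have : r ∈ Icc (a 0) (a (max b 0)) :=
      ⟨by rw [h0]; exact hr, hb _ (le_max_left _ _)⟩
    obtain ⟨s, hs, has⟩ := intermediate_value_Icc hb0 (hc.mono (Icc_subset_Ici_self)) this
    exact ⟨s, hs.1, has⟩
  have himg : a '' Ici 0 = Ici 0 := by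
    apply Subset.antisymm
    · rintro _ ⟨s, hs, rfl⟩
      have := hm.monotoneOn (self_mem_Ici) hs hs
      simpa [h0] using this
    · rintro r hr
      obtain ⟨s, hs, has⟩ := hsurj r hr
      exact ⟨s, hs, has⟩
  let e : (Ici (0:ℝ)) ≃o (Ici (0:ℝ)) := (hm.orderIso a _).trans (OrderIso.setCongr _ _ himg)
  have he : ∀ s : Ici (0:ℝ), (e s : ℝ) = a s := fun s => rfl
  let g : ℝ → ℝ := fun r => (e.symm ⟨max r 0, mem_Ici.mpr (le_max_right _ _)⟩ : ℝ)
  have hag : ∀ r : ℝ, 0 ≤ r → a (g r) = r := by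
    intro r hr
    have : (e (e.symm ⟨max r 0, mem_Ici.mpr (le_max_right _ _)⟩) : ℝ) = max r 0 := by
      rw [OrderIso.apply_symm_apply]
    rw [he] at this
    simpa [g, max_eq_left hr] using this
  have hg0 : ∀ r, 0 ≤ g r := fun r => (e.symm _).2
  have hgm : StrictMonoOn g (Ici 0) := by
    intro r hr r' hr' hlt
    have : e.symm ⟨max r 0, mem_Ici.mpr (le_max_right _ _)⟩ < e.symm ⟨max r' 0, mem_Ici.mpr (le_max_right _ _)⟩ := by
      apply e.symm.strictMono
      simp only [Subtype.mk_lt_mk]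
      rw [max_eq_left hr, max_eq_left hr']
      exact hlt
    exact this
  have hgc : Continuous g := by
    have : Continuous fun r : ℝ => (⟨max r 0, mem_Ici.mpr (le_max_right _ _)⟩ : Ici (0:ℝ)) :=
      Continuous.subtype_mk (continuous_id.max continuous_const) _
    exact continuous_subtype_val.comp (e.symm.continuous.comp this)
  have hga : ∀ s : ℝ, 0 ≤ s → g (a s) = s := by
    intro s hs
    have has : 0 ≤ a s := by
      have := hm.monotoneOn self_mem_Ici hs hs; simpa [h0] using this
    exact hm.injOn (hg0 _) hs (hag (a s) has)
  refine ⟨g, ⟨hgc.continuousOn, hgm, ?_, ?_⟩, fun r hr => ⟨hg0 r, hag r hr⟩, hga⟩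
  · have h00 : g 0 ∈ Ici (0:ℝ) := hg0 0
    exact hm.injOn h00 self_mem_Ici (by rw [hag 0 le_rfl, h0])
  · rw [tendsto_atTop_atTop]
    intro b
    have hab0 : 0 ≤ a (max b 0) := by
      have := hm.monotoneOn self_mem_Ici (le_max_right b 0) (le_max_right b 0)
      simpa [h0] using this
    refine ⟨a (max b 0), fun r hra => ?_⟩
    have hr0 : (0:ℝ) ≤ r := le_trans hab0 hra
    have h1 : g (a (max b 0)) ≤ g r := hgm.monotoneOn hab0 hr0 hra
    rw [hga _ (le_max_right b 0)] at h1
    exact le_trans (le_max_left b 0) h1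

/-- Proposition 3.2, (iv) ⇒ (i): Lyapunov sufficiency for the non-uniform in time IOS property. -/
theorem prop32_iv_implies_i {X Y U D : Type*}
    [NormedAddCommGroup X] [NormedSpace ℝ X] [NormedAddCommGroup Y] [NormedSpace ℝ Y]
    [NormedAddCommGroup U] [NormedSpace ℝ U] [Nonempty D]
    (f : ℕ → D → X → U → X) (H : ℕ → X → Y)
    (hf0 : ∀ (t : ℕ) (d : D), f t d 0 0 = 0) (hH0 : ∀ t : ℕ, H t 0 = 0)
    (hA1 : ∃ a β : ℝ → ℝ, IsKInf a ∧ IsKPlus β ∧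
      ∀ (t : ℕ) (d : D) (x : X) (u : U),
        ‖f t d x u‖ ≤ a (β t * ‖x‖) + a (β t * ‖u‖))
    (hH2 : ∀ (T : ℕ) (S : Set X), Bornology.IsBounded S → ∀ ε > (0 : ℝ),
      Bornology.IsBounded {y : Y | ∃ t ≤ T, ∃ x ∈ S, y = H t x} ∧
      ∃ δ > (0 : ℝ), ∀ t ≤ T, ∀ x ∈ S, ∀ x₀ ∈ S, ‖x - x₀‖ < δ → ‖H t x - H t x₀‖ < ε)
    (V : ℕ → X → ℝ) (a₁ a₂ a₃ β φ μ : ℝ → ℝ) (lam : ℝ)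
    (ha₁ : IsKInf a₁) (ha₂ : IsKInf a₂) (ha₃ : IsKInf a₃)
    (hβ : IsKPlus β) (hφ : IsKPlus φ) (hμ : IsKPlus μ)
    (hlam₀ : 0 < lam) (hlam₁ : lam < 1)
    (hVnonneg : ∀ (t : ℕ) (x : X), 0 ≤ V t x)
    (hVbound : ∀ (t : ℕ) (x : X),
      a₁ (‖H t x‖ + μ t * ‖x‖) ≤ V t x ∧ V t x ≤ a₂ (β t * ‖x‖))
    (hVdec : ∀ (t : ℕ) (d : D) (x : X) (u : U),
      V (t + 1) (f t d x u) ≤ lam * V t x + a₃ (φ t * ‖u‖)) :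
    ∃ (σ : ℝ → ℝ → ℝ) (β' γ ρ : ℝ → ℝ),
      IsKL σ ∧ IsKPlus β' ∧ IsKPlus γ ∧ IsKInf ρ ∧
      ∀ (d : ℕ → D) (u : ℕ → U) (t₀ : ℕ) (x₀ : X) (x : ℕ → X),
        x t₀ = x₀ → (∀ t, t₀ ≤ t → x (t + 1) = f t (d t) (x t) (u t)) →
        ∀ t, t₀ ≤ t →
          ‖H t (x t)‖ ≤ max (σ (β' t₀ * ‖x₀‖) ((t : ℝ) - (t₀ : ℝ)))
            (⨆ τ ∈ Set.Icc t₀ t, σ (β' τ * ρ (γ τ * ‖u τ‖)) ((t : ℝ) - (τ : ℝ))) := by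
  obtain ⟨g₁, hg₁, hg₁inv, hg₁left⟩ := KInf_inv ha₁
  obtain ⟨g₂, hg₂, hg₂inv, hg₂left⟩ := KInf_inv ha₂
  set l : ℝ := Real.sqrt lam with hldef
  have hl0 : 0 < l := Real.sqrt_pos.mpr hlam₀
  have hl1 : l < 1 := by
    rw [hldef, show (1:ℝ) = Real.sqrt 1 by simp]
    exact Real.sqrt_lt_sqrt hlam₀.le hlam₁
  have hll : l * l = lam := Real.mul_self_sqrt hlam₀.le
  set K : ℝ := 1 / (l * (1 - l)) with hKdef
  have hK : 0 < K := by
    apply one_div_pos.mpr; apply mul_pos hl0; linarith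
  have hlog : Real.log l < 0 := Real.log_neg hl0 hl1
  set E : ℝ → ℝ := fun t => Real.exp (Real.log l * t) with hEdef
  have hEpos : ∀ t, 0 < E t := fun t => Real.exp_pos _
  have hEnat : ∀ n : ℕ, E (n : ℝ) = l ^ n := by
    intro n
    rw [hEdef]
    simp only []
    rw [mul_comm, Real.exp_nat_mul, Real.exp_log hl0]
  have hEanti : ∀ t₁ t₂ : ℝ, t₁ ≤ t₂ → E t₂ ≤ E t₁ := by
    intro t₁ t₂ h
    exact Real.exp_le_exp.mpr (mul_le_mul_of_nonpos_left h hlog.le)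
  have hEtend : Tendsto E atTop (nhds 0) := by
    apply Real.tendsto_exp_atBot.comp
    exact (tendsto_const_mul_atBot_of_neg hlog).mpr tendsto_id
  -- basic nonnegativity facts
  have ha₁nn : ∀ s : ℝ, 0 ≤ s → 0 ≤ a₁ s := fun s hs => KInf_nonneg ha₁ hs
  have ha₂nn : ∀ s : ℝ, 0 ≤ s → 0 ≤ a₂ s := fun s hs => KInf_nonneg ha₂ hs
  have ha₃nn : ∀ s : ℝ, 0 ≤ s → 0 ≤ a₃ s := fun s hs => KInf_nonneg ha₃ hs
  have hg₁mono : MonotoneOn g₁ (Ici 0) := hg₁.2.1.monotoneOn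
  have hg₁nn : ∀ s : ℝ, 0 ≤ s → 0 ≤ g₁ s := fun s hs => (hg₁inv s hs).1
  obtain ⟨ha₂c, ha₂m, ha₂0, ha₂t⟩ := ha₂
  obtain ⟨ha₃c, ha₃m, ha₃0, ha₃t⟩ := ha₃
  -- the KL function and the gain functions
  refine ⟨fun s t => g₁ (a₂ s * E t), fun t => β t + 1, φ, fun s => g₂ (K * a₃ s),
    ⟨?_, ?_, ?_⟩, ⟨hβ.1.add continuousOn_const, fun t ht => by simp only []; linarith [hβ.2 t ht]⟩,
    hφ, ⟨?_, ?_, ?_, ?_⟩, ?_⟩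
  · -- continuity of σ
    apply hg₁.1.comp
    · apply ContinuousOn.mul
      · exact ha₂c.comp continuousOn_fst (fun p hp => hp.1)
      · exact (Real.continuous_exp.comp (continuous_const.mul continuous_snd)).continuousOn
    · intro p hp
      exact mul_nonneg (ha₂nn _ hp.1) (hEpos _).le
  · -- strict monotonicity in s
    intro t _
    constructor
    · intro s₁ hs₁ s₂ hs₂ hlt
      have h1 : a₂ s₁ * E t < a₂ s₂ * E t :=
        mul_lt_mul_of_pos_right (ha₂m hs₁ hs₂ hlt) (hEpos t)
      exact hg₁.2.1 (mem_Ici.mpr (mul_nonneg (ha₂nn _ hs₁) (hEpos t).le))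
        (mem_Ici.mpr (mul_nonneg (ha₂nn _ hs₂) (hEpos t).le)) h1
    · simp [ha₂0, hg₁.2.2.1]
  · -- antitone in t and tendsto 0
    intro s hs
    constructor
    · intro t₁ _ t₂ _ hle
      apply hg₁mono (mem_Ici.mpr (mul_nonneg (ha₂nn _ hs) (hEpos _).le))
        (mem_Ici.mpr (mul_nonneg (ha₂nn _ hs) (hEpos _).le))
      exact mul_le_mul_of_nonneg_left (hEanti _ _ hle) (ha₂nn _ hs)
    · have h1 : Tendsto (fun t => a₂ s * E t) atTop (nhds 0) := by
        simpa using hEtend.const_mul (a₂ s)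
      have h2 : Tendsto (fun t => a₂ s * E t) atTop (nhdsWithin 0 (Ici 0)) := by
        apply tendsto_nhdsWithin_of_tendsto_nhds_of_eventually_within _ h1
        exact Eventually.of_forall fun t => mul_nonneg (ha₂nn _ hs) (hEpos t).le
      have h3 := (hg₁.1 0 self_mem_Ici).tendsto.comp h2
      rwa [hg₁.2.2.1] at h3
  · -- ρ continuous
    apply hg₂.1.comp (continuousOn_const.mul ha₃c)
    intro s hs
    exact mul_nonneg hK.le (ha₃nn s hs)
  · -- ρ strictly monotone
    intro s₁ hs₁ s₂ hs₂ hlt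
    exact hg₂.2.1 (mem_Ici.mpr (mul_nonneg hK.le (ha₃nn _ hs₁)))
      (mem_Ici.mpr (mul_nonneg hK.le (ha₃nn _ hs₂)))
      (mul_lt_mul_of_pos_left (ha₃m hs₁ hs₂ hlt) hK)
  · -- ρ 0 = 0
    simp [ha₃0, hg₂.2.2.1]
  · -- ρ tendsto atTop
    apply hg₂.2.2.2.comp
    exact (tendsto_const_mul_atTop_of_pos hK).mpr ha₃t
  -- the trajectory estimate
  intro d u t₀ x₀ x hx0 hxstep t ht
  simp only []
  set b : ℕ → ℝ := fun τ => a₃ (φ τ * ‖u τ‖) with hbdef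
  have hbnn : ∀ τ, 0 ≤ b τ := fun τ =>
    ha₃nn _ (mul_nonneg (hφ.2 _ (Nat.cast_nonneg τ)).le (norm_nonneg _))
  set A : ℝ := a₂ (β t₀ * ‖x₀‖) with hAdef
  have hA0 : 0 ≤ A :=
    ha₂nn _ (mul_nonneg (hβ.2 _ (Nat.cast_nonneg t₀)).le (norm_nonneg _))
  set M : ℕ → ℝ := fun n =>
    Nat.rec 0 (fun k Mk => max (l * Mk) (l * (K * b (t₀ + k)))) n with hMdef
  have hMsucc : ∀ n, M (n + 1) = max (l * M n) (l * (K * b (t₀ + n))) := fun n => rfl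
  have key : ∀ z bb : ℝ, 0 ≤ z → 0 ≤ bb → lam * z + bb ≤ max (l * z) (l * (K * bb)) := by
    intro z bb hz hbb
    have h1 : l * (K * bb) = bb / (1 - l) := by
      rw [hKdef]; field_simp
    rcases le_or_gt bb ((1 - l) * (l * z)) with h | h
    · apply le_max_of_le_left
      nlinarith
    · apply le_max_of_le_right
      rw [h1, le_div_iff₀ (by linarith : (0:ℝ) < 1 - l)]
      nlinarith
  have claim : ∀ n : ℕ, V (t₀ + n) (x (t₀ + n)) ≤ max (A * l ^ n) (M n) ∧
      (M n = 0 ∨ ∃ τ, t₀ ≤ τ ∧ τ < t₀ + n ∧ M n = K * b τ * l ^ (t₀ + n - τ)) ∧ 0 ≤ M n := by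
    intro n
    induction n with
    | zero =>
      refine ⟨?_, Or.inl rfl, le_refl 0⟩
      simp only [Nat.add_zero, pow_zero, mul_one]
      rw [hx0]
      exact le_max_of_le_left (hVbound t₀ x₀).2
    | succ n ih =>
      obtain ⟨ihW, ihM, ihM0⟩ := ih
      have hx1 : x (t₀ + n + 1) = f (t₀ + n) (d (t₀ + n)) (x (t₀ + n)) (u (t₀ + n)) :=
        hxstep (t₀ + n) (Nat.le_add_right _ _)
      have hW1 : V (t₀ + (n + 1)) (x (t₀ + (n + 1))) ≤
          lam * V (t₀ + n) (x (t₀ + n)) + b (t₀ + n) := by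
        have := hVdec (t₀ + n) (d (t₀ + n)) (x (t₀ + n)) (u (t₀ + n))
        rw [show t₀ + (n + 1) = t₀ + n + 1 by omega, hx1]
        exact this
      have hmax0 : 0 ≤ max (A * l ^ n) (M n) :=
        le_max_of_le_left (mul_nonneg hA0 (pow_nonneg hl0.le n))
      have hW2 : V (t₀ + (n + 1)) (x (t₀ + (n + 1))) ≤
          lam * max (A * l ^ n) (M n) + b (t₀ + n) := by
        refine hW1.trans ?_
        have := mul_le_mul_of_nonneg_left ihW hlam₀.le
        linarith
      have hW3 := hW2.trans (key _ _ hmax0 (hbnn _))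
      constructor
      · refine hW3.trans (le_of_eq ?_)
        rw [mul_max_of_nonneg _ _ hl0.le, hMsucc]
        rw [max_assoc]
        congr 1
        ring
      refine ⟨?_, ?_⟩
      · rcases max_choice (l * M n) (l * (K * b (t₀ + n))) with h | h
        · rcases ihM with h0 | ⟨τ, hτ1, hτ2, hτ3⟩
          · left; rw [hMsucc, h, h0, mul_zero]
          · right
            refine ⟨τ, hτ1, by omega, ?_⟩
            rw [hMsucc, h, hτ3, show t₀ + (n + 1) - τ = (t₀ + n - τ) + 1 by omega]
            ring
        · right
          refine ⟨t₀ + n, Nat.le_add_right _ _, by omega, ?_⟩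
          rw [hMsucc, h, show t₀ + (n + 1) - (t₀ + n) = 1 by omega]
          ring
      · rw [hMsucc]
        exact le_max_of_le_left (mul_nonneg hl0.le ihM0)
  -- apply the claim at n = t - t₀
  set n : ℕ := t - t₀ with hndef
  have htn : t = t₀ + n := by omega
  obtain ⟨hW, hdisj, hM0⟩ := claim n
  rw [← htn] at hW hdisj
  -- from V to the output
  have hμnn : 0 ≤ μ t * ‖x t‖ :=
    mul_nonneg (hμ.2 _ (Nat.cast_nonneg t)).le (norm_nonneg _)
  have hHa : a₁ ‖H t (x t)‖ ≤ V t (x t) := by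
    refine le_trans ?_ (hVbound t (x t)).1
    exact ha₁.2.1.monotoneOn (mem_Ici.mpr (norm_nonneg _))
      (mem_Ici.mpr (by positivity)) (le_add_of_nonneg_right hμnn)
  have hHg : ‖H t (x t)‖ ≤ g₁ (V t (x t)) := by
    have h1 : g₁ (a₁ ‖H t (x t)‖) ≤ g₁ (V t (x t)) :=
      hg₁mono (mem_Ici.mpr (ha₁nn _ (norm_nonneg _))) (mem_Ici.mpr (hVnonneg t (x t))) hHa
    rwa [hg₁left _ (norm_nonneg _)] at h1
  -- nonnegativity of the first σ term
  have hσinit_nn : 0 ≤ g₁ (a₂ ((β t₀ + 1) * ‖x₀‖) * E ((t : ℝ) - (t₀ : ℝ))) := by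
    apply hg₁nn
    apply mul_nonneg _ (hEpos _).le
    exact ha₂nn _ (mul_nonneg (by linarith [hβ.2 _ (Nat.cast_nonneg t₀)]) (norm_nonneg _))
  -- the E value matches the power
  have hE_cast : ∀ τ : ℕ, τ ≤ t → E ((t : ℝ) - (τ : ℝ)) = l ^ (t - τ) := by
    intro τ hτ
    rw [show (t : ℝ) - (τ : ℝ) = ((t - τ : ℕ) : ℝ) by push_cast [Nat.cast_sub hτ]; ring]
    exact hEnat _
  rcases max_choice (A * l ^ n) (M n) with hmx | hmx <;> rw [hmx] at hW
  · -- initial state term dominates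
    apply le_max_of_le_left
    refine hHg.trans ?_
    apply hg₁mono (mem_Ici.mpr (hVnonneg t (x t)))
    · exact mem_Ici.mpr (mul_nonneg
        (ha₂nn _ (mul_nonneg (by linarith [hβ.2 _ (Nat.cast_nonneg t₀)]) (norm_nonneg _)))
        (hEpos _).le)
    refine hW.trans ?_
    rw [hE_cast t₀ ht, show t - t₀ = n from rfl]
    apply mul_le_mul_of_nonneg_right _ (pow_nonneg hl0.le n)
    apply ha₂m.monotoneOn (mem_Ici.mpr (mul_nonneg (hβ.2 _ (Nat.cast_nonneg t₀)).le (norm_nonneg _)))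
    · exact mem_Ici.mpr (mul_nonneg (by linarith [hβ.2 _ (Nat.cast_nonneg t₀)]) (norm_nonneg _))
    · exact mul_le_mul_of_nonneg_right (by linarith) (norm_nonneg _)
  · -- the disturbance term dominates
    rcases hdisj with h0 | ⟨τ, hτ1, hτ2, hτ3⟩
    · apply le_max_of_le_left
      have hV0 : V t (x t) ≤ 0 := h0 ▸ hW
      have h2 := hg₁mono (mem_Ici.mpr (hVnonneg t (x t))) self_mem_Ici hV0
      rw [hg₁.2.2.1] at h2
      exact (hHg.trans h2).trans hσinit_nn
    · -- the atom estimate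
      apply le_max_of_le_right
      have hτt : τ ≤ t := by omega
      set sτ : ℝ := φ τ * ‖u τ‖ with hsτ
      have hsτnn : 0 ≤ sτ := mul_nonneg (hφ.2 _ (Nat.cast_nonneg τ)).le (norm_nonneg _)
      have hρnn : 0 ≤ g₂ (K * a₃ sτ) := (hg₂inv _ (mul_nonneg hK.le (ha₃nn _ hsτnn))).1
      have hβ'1 : (1:ℝ) ≤ β τ + 1 := by linarith [hβ.2 _ (Nat.cast_nonneg τ)]
      have hatom : K * b τ ≤ a₂ ((β τ + 1) * g₂ (K * a₃ sτ)) := by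
        have h1 : a₂ (g₂ (K * a₃ sτ)) = K * a₃ sτ :=
          (hg₂inv _ (mul_nonneg hK.le (ha₃nn _ hsτnn))).2
        have h2 : g₂ (K * a₃ sτ) ≤ (β τ + 1) * g₂ (K * a₃ sτ) :=
          le_mul_of_one_le_left hρnn hβ'1
        have h3 := ha₂m.monotoneOn (mem_Ici.mpr hρnn)
          (mem_Ici.mpr (le_trans hρnn h2)) h2
        rw [h1] at h3
        exact h3
      have hatom2 : V t (x t) ≤ a₂ ((β τ + 1) * g₂ (K * a₃ sτ)) * E ((t:ℝ) - (τ:ℝ)) := by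
        refine hW.trans ?_
        rw [hτ3, hE_cast τ hτt]
        exact mul_le_mul_of_nonneg_right hatom (pow_nonneg hl0.le _)
      have hσatom : ‖H t (x t)‖ ≤ g₁ (a₂ ((β τ + 1) * g₂ (K * a₃ sτ)) * E ((t:ℝ) - (τ:ℝ))) := by
        refine hHg.trans (hg₁mono (mem_Ici.mpr (hVnonneg t (x t))) ?_ hatom2)
        refine mem_Ici.mpr (mul_nonneg ?_ (hEpos _).le)
        exact ha₂nn _ (mul_nonneg (by linarith) hρnn)
      -- estimate by the iSup
      set F : ℕ → ℝ := fun τ' =>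
        g₁ (a₂ ((β τ' + 1) * g₂ (K * a₃ (φ τ' * ‖u τ'‖))) * E ((t : ℝ) - (τ' : ℝ))) with hF
      have hτmem : τ ∈ Set.Icc t₀ t := ⟨hτ1, hτt⟩
      have hbdd : BddAbove (Set.range fun τ' : ℕ => ⨆ _ : τ' ∈ Set.Icc t₀ t, F τ') := by
        refine ⟨max 0 ((Finset.Icc t₀ t).sup' ⟨t₀, by simp [ht]⟩ F), ?_⟩
        rintro _ ⟨τ', rfl⟩
        show (⨆ _ : τ' ∈ Set.Icc t₀ t, F τ') ≤ _
        by_cases hmem : τ' ∈ Set.Icc t₀ t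
        · rw [ciSup_pos (f := fun _ : τ' ∈ Set.Icc t₀ t => F τ') hmem]
          exact le_max_of_le_right (Finset.le_sup' F (by simpa [Finset.mem_Icc] using hmem))
        · haveI : IsEmpty (τ' ∈ Set.Icc t₀ t) := ⟨hmem⟩
          rw [Real.iSup_of_isEmpty]
          exact le_max_left 0 _
      calc ‖H t (x t)‖ ≤ F τ := hσatom
        _ = ⨆ _ : τ ∈ Set.Icc t₀ t, F τ := (ciSup_pos (f := fun _ : τ ∈ Set.Icc t₀ t => F τ) hτmem).symm
        _ ≤ ⨆ τ' ∈ Set.Icc t₀ t, F τ' := le_ciSup hbdd τ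
end
end

section
/- Theorem 4.2 (necessary Lyapunov conditions for static ROFS). Consider system (1.2a) with stabilized output Y = H(t,x) and measured output y = h(t,x), under hypotheses (A2), (A3) and (H2). Suppose there exists a continuous function k ∈ CU(ℕ × S; U) with f(t,d,0,k(t,0)) = 0 for all (t,d) ∈ ℕ × D such that the closed-loop system x(t+1) = f(t, d(t), x(t), k(t, h(t, x(t)))) with output Y(t) = H(t, x(t)) is non-uniformly in time RGAOS. Then there exist a function V ∈ CU(ℕ × X; [0,∞)), functions a₁, a₂ ∈ K∞, functions β₁, β₂ ∈ K⁺ and a constant λ ∈ (0,1) such that: a₁(‖H(t,x)‖_Y) ≤ V(t,x) ≤ a₂(β₂(t)‖x‖_X) for all (t,x) ∈ ℕ × X, and inf_{u ∈ U} sup{ V(t+1, f(t,d,x,u)) − λ·V(t,x) : x ∈ h⁻¹(t,y), d ∈ D } ≤ 0 for all (t,y) ∈ ℕ × S. Moreover, if k(t,0) = 0 for all t ∈ ℕ, then additionally sup{ V(t+1, f(t,d,x,0)) − λ·V(t,x) : x ∈ h⁻¹(t,0), d ∈ D } ≤ 0 for all t ∈ ℕ. -/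
open Filter Topology Bornology Set

noncomputable section

/-- Membership in the class `CU(ℕ × A; W)` of the paper. -/
def MemCUOn {Z W : Type*} [NormedAddCommGroup Z] [NormedAddCommGroup W]
    (A : Set Z) (G : ℕ → Z → W) : Prop :=
  (∀ t : ℕ, ContinuousOn (G t) A) ∧
  ∀ (T : ℕ) (B : Set Z), B ⊆ A → Bornology.IsBounded B → ∀ ε > (0 : ℝ),
    Bornology.IsBounded {w : W | ∃ t ≤ T, ∃ z ∈ B, w = G t z} ∧
    ∃ δ > (0 : ℝ), ∀ t ≤ T, ∀ z ∈ B, ∀ z' ∈ B, ‖z - z'‖ < δ → ‖G t z - G t z'‖ < ε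

private def ramp (x : ℝ) : ℝ := max 0 (min x 1)

private lemma ramp_nonneg (x : ℝ) : 0 ≤ ramp x := le_max_left _ _
private lemma ramp_le_one (x : ℝ) : ramp x ≤ 1 := max_le zero_le_one (min_le_right _ _)
private lemma ramp_mono : Monotone ramp := fun a b hab => max_le_max le_rfl (min_le_min hab le_rfl)
private lemma ramp_continuous : Continuous ramp :=
  continuous_const.max ((continuous_id.min continuous_const))
private lemma ramp_of_nonpos {x : ℝ} (hx : x ≤ 0) : ramp x = 0 :=
  max_eq_left (le_trans (min_le_left _ _) hx)
private lemma ramp_of_one_le {x : ℝ} (hx : 1 ≤ x) : ramp x = 1 :=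
  (max_eq_right (by rw [min_eq_right hx]; exact zero_le_one)).trans (min_eq_right hx)

private def PN (Dq : ℕ → ℕ) (N : ℕ) (s : ℝ) : ℝ :=
  (Dq 1 : ℝ) + ∑ j ∈ Finset.range N, (((Dq (j+2) : ℝ)) - (Dq (j+1) : ℝ)) * ramp (s - j)

private def Pfun (Dq : ℕ → ℕ) (s : ℝ) : ℝ := PN Dq (⌊s⌋₊ + 1) s

private lemma PN_eq_Pfun (Dq : ℕ → ℕ) {N : ℕ} {s : ℝ} (hN : ⌊s⌋₊ + 1 ≤ N) :
    PN Dq N s = Pfun Dq s := by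
  unfold Pfun PN
  congr 1
  refine (Finset.sum_subset (Finset.range_subset_range.2 hN) ?_).symm
  intro j hj hj'
  have hjs : (⌊s⌋₊ : ℝ) + 1 ≤ j := by
    have : ⌊s⌋₊ + 1 ≤ j := le_of_not_gt (fun hc => hj' (Finset.mem_range.2 hc))
    exact_mod_cast this
  have : s - j ≤ 0 := by
    have := (Nat.lt_floor_add_one s).le
    linarith
  rw [ramp_of_nonpos this, mul_zero]

private lemma PN_mono (Dq : ℕ → ℕ) (hD : Monotone Dq) (N : ℕ) : Monotone (PN Dq N) := by
  intro a b hab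
  unfold PN
  gcongr with j hj
  · exact sub_nonneg.2 (by exact_mod_cast hD (by omega : j + 1 ≤ j + 2))
  · exact ramp_mono (by linarith)

private lemma Pfun_mono (Dq : ℕ → ℕ) (hD : Monotone Dq) : Monotone (Pfun Dq) := by
  intro a b hab
  have hN : ⌊a⌋₊ + 1 ≤ ⌊b⌋₊ + 1 := by
    have := Nat.floor_mono hab; omega
  rw [← PN_eq_Pfun Dq hN, Pfun]
  exact PN_mono Dq hD _ hab

private lemma Pfun_nonneg (Dq : ℕ → ℕ) (hD : Monotone Dq) (s : ℝ) : 0 ≤ Pfun Dq s := by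
  unfold Pfun PN
  have h1 : (0:ℝ) ≤ (Dq 1 : ℝ) := by positivity
  refine add_nonneg h1 (Finset.sum_nonneg fun j _ => mul_nonneg ?_ (ramp_nonneg _))
  exact sub_nonneg.2 (by exact_mod_cast hD (by omega : j + 1 ≤ j + 2))

private lemma le_Pfun (Dq : ℕ → ℕ) (hD : Monotone Dq) {s : ℝ} (hs : 0 ≤ s) :
    (Dq (⌊s⌋₊ + 1) : ℝ) ≤ Pfun Dq s := by
  unfold Pfun PN
  rw [Finset.sum_range_succ]
  have hfl : (⌊s⌋₊ : ℝ) ≤ s := Nat.floor_le hs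
  have hsum : ∑ j ∈ Finset.range ⌊s⌋₊, (((Dq (j+2) : ℝ)) - (Dq (j+1) : ℝ)) * ramp (s - j)
      = (Dq (⌊s⌋₊ + 1) : ℝ) - Dq 1 := by
    have : ∀ j ∈ Finset.range ⌊s⌋₊,
        (((Dq (j+2) : ℝ)) - (Dq (j+1) : ℝ)) * ramp (s - j)
        = ((Dq (j+1+1) : ℝ)) - (Dq (j+1) : ℝ) := by
      intro j hj
      have hj' : (j:ℝ) ≤ ⌊s⌋₊ - 1 := by
        have := Finset.mem_range.1 hj
        have : (j:ℝ) + 1 ≤ ⌊s⌋₊ := by exact_mod_cast this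
        linarith
      rw [ramp_of_one_le (by linarith), mul_one]
    rw [Finset.sum_congr rfl this]
    exact Finset.sum_range_sub (fun n => (Dq (n+1) : ℝ)) ⌊s⌋₊
  rw [hsum]
  have hlast : 0 ≤ (((Dq (⌊s⌋₊+2) : ℝ)) - (Dq (⌊s⌋₊+1) : ℝ)) * ramp (s - ⌊s⌋₊) :=
    mul_nonneg (sub_nonneg.2 (by exact_mod_cast hD (by omega : ⌊s⌋₊ + 1 ≤ ⌊s⌋₊ + 2)))
      (ramp_nonneg _)
  linarith

private lemma PN_continuous (Dq : ℕ → ℕ) (N : ℕ) : Continuous (PN Dq N) := by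
  unfold PN
  exact continuous_const.add (continuous_finset_sum _ fun j _ =>
    continuous_const.mul (ramp_continuous.comp (continuous_id.sub continuous_const)))

private lemma Pfun_continuous (Dq : ℕ → ℕ) : Continuous (Pfun Dq) := by
  rw [continuous_iff_continuousAt]
  intro s₀
  refine ContinuousAt.congr ((PN_continuous Dq (⌊s₀⌋₊ + 2)).continuousAt) ?_
  have hmem : Iio (s₀ + 1) ∈ 𝓝 s₀ := Iio_mem_nhds (by linarith)
  filter_upwards [hmem] with s hs
  refine PN_eq_Pfun Dq ?_
  have h1 : ⌊s⌋₊ ≤ ⌊s₀ + 1⌋₊ := Nat.floor_mono (le_of_lt hs)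
  have h2 : ⌊s₀ + 1⌋₊ ≤ ⌊s₀⌋₊ + 1 := by
    by_cases hc : 0 ≤ s₀
    · rw [Nat.floor_add_one hc]
    · push_neg at hc
      have : ⌊s₀ + 1⌋₊ ≤ 1 := by
        have h2 : s₀ + 1 < 2 := by linarith
        by_cases hc2 : s₀ + 1 < 0
        · rw [Nat.floor_eq_zero.2 (by linarith)]; omega
        · push_neg at hc2
          have : ⌊s₀ + 1⌋₊ < 2 := by
            rw [Nat.floor_lt hc2]; exact_mod_cast h2
          omega
      omega
  omega
private def zeta (Dq : ℕ → ℕ) (r : ℝ) : ℝ :=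
  Real.exp (-(Real.log 4 * Pfun Dq (max 0 (-Real.logb 2 r))))

private def aone (Dq : ℕ → ℕ) (r : ℝ) : ℝ := r * zeta Dq r

private lemma log4_pos : (0:ℝ) < Real.log 4 := Real.log_pos (by norm_num)

private lemma zeta_pos (Dq : ℕ → ℕ) (r : ℝ) : 0 < zeta Dq r := Real.exp_pos _

private lemma zeta_le_one (Dq : ℕ → ℕ) (hD : Monotone Dq) (r : ℝ) : zeta Dq r ≤ 1 := by
  rw [zeta, Real.exp_le_one_iff, neg_nonpos]
  exact mul_nonneg log4_pos.le (Pfun_nonneg Dq hD _)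

private lemma zeta_mono (Dq : ℕ → ℕ) (hD : Monotone Dq) {r r' : ℝ} (hr : 0 < r) (hrr : r ≤ r') :
    zeta Dq r ≤ zeta Dq r' := by
  rw [zeta, zeta, Real.exp_le_exp, neg_le_neg_iff]
  refine mul_le_mul_of_nonneg_left (Pfun_mono Dq hD ?_) log4_pos.le
  have := (Real.logb_le_logb (by norm_num : (1:ℝ) < 2) hr (lt_of_lt_of_le hr hrr)).2 hrr
  exact max_le_max le_rfl (by linarith)

private lemma aone_nonneg (Dq : ℕ → ℕ) {r : ℝ} (hr : 0 ≤ r) : 0 ≤ aone Dq r :=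
  mul_nonneg hr (zeta_pos Dq r).le

private lemma aone_le_self (Dq : ℕ → ℕ) (hD : Monotone Dq) {r : ℝ} (hr : 0 ≤ r) :
    aone Dq r ≤ r := by
  calc aone Dq r ≤ r * 1 := mul_le_mul_of_nonneg_left (zeta_le_one Dq hD r) hr
  _ = r := mul_one r

private lemma aone_zero (Dq : ℕ → ℕ) : aone Dq 0 = 0 := zero_mul _

private lemma aone_mono (Dq : ℕ → ℕ) (hD : Monotone Dq) {r r' : ℝ} (hr : 0 ≤ r) (hrr : r ≤ r') :
    aone Dq r ≤ aone Dq r' := by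
  rcases eq_or_lt_of_le hr with hr0 | hr0
  · rw [← hr0, aone_zero]; exact aone_nonneg Dq (by linarith)
  · exact mul_le_mul hrr (zeta_mono Dq hD hr0 hrr) (zeta_pos Dq r).le (by linarith)

private lemma aone_strictMonoOn (Dq : ℕ → ℕ) (hD : Monotone Dq) :
    StrictMonoOn (aone Dq) (Set.Ici 0) := by
  intro r hr r' hr' hlt
  rcases eq_or_lt_of_le (Set.mem_Ici.1 hr) with hr0 | hr0
  · rw [← hr0, aone_zero]
    exact mul_pos (by linarith) (zeta_pos Dq r')
  · calc aone Dq r = r * zeta Dq r := rfl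
      _ < r' * zeta Dq r := by
          exact mul_lt_mul_of_pos_right hlt (zeta_pos Dq r)
      _ ≤ r' * zeta Dq r' := mul_le_mul_of_nonneg_left (zeta_mono Dq hD hr0 hlt.le) (by linarith)

private lemma aone_continuousOn (Dq : ℕ → ℕ) (hD : Monotone Dq) :
    ContinuousOn (aone Dq) (Set.Ici 0) := by
  intro r hr
  rcases eq_or_lt_of_le (Set.mem_Ici.1 hr) with hr0 | hr0
  · -- continuity at 0 within Ici 0 by squeeze
    rw [← hr0]
    have h0 : aone Dq 0 = 0 := aone_zero Dq
    unfold ContinuousWithinAt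
    rw [h0]
    refine squeeze_zero' ?_ ?_ (g := fun x : ℝ => x) ?_
    · filter_upwards [self_mem_nhdsWithin] with x hx
      exact aone_nonneg Dq hx
    · filter_upwards [self_mem_nhdsWithin] with x hx
      exact aone_le_self Dq hD hx
    · exact Filter.Tendsto.mono_left Filter.tendsto_id nhdsWithin_le_nhds
  · -- continuity at r > 0
    refine ContinuousAt.continuousWithinAt ?_
    have hz : ContinuousAt (zeta Dq) r := by
      refine Real.continuous_exp.continuousAt.comp ?_
      refine (ContinuousAt.mul continuousAt_const ?_).neg
      refine ((Pfun_continuous Dq).continuousAt).comp ?_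
      refine (continuousAt_const.max ?_)
      refine ContinuousAt.neg ?_
      unfold Real.logb
      exact (Real.continuousAt_log (ne_of_gt hr0)).div_const _
    exact continuousAt_id.mul hz

private lemma aone_tendsto_atTop (Dq : ℕ → ℕ) (hD : Monotone Dq) :
    Filter.Tendsto (aone Dq) Filter.atTop Filter.atTop := by
  have hc : 0 < zeta Dq 1 := zeta_pos Dq 1
  refine tendsto_atTop_mono' Filter.atTop ?_
    (Filter.Tendsto.const_mul_atTop hc Filter.tendsto_id)
  filter_upwards [Filter.eventually_ge_atTop (1:ℝ)] with r hr
  have : zeta Dq 1 ≤ zeta Dq r := zeta_mono Dq hD one_pos hr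
  calc zeta Dq 1 * r ≤ zeta Dq r * r := mul_le_mul_of_nonneg_right this (by linarith)
    _ = aone Dq r := mul_comm _ _

private lemma aone_isKInf (Dq : ℕ → ℕ) (hD : Monotone Dq) : IsKInf (aone Dq) :=
  ⟨aone_continuousOn Dq hD, aone_strictMonoOn Dq hD, aone_zero Dq, aone_tendsto_atTop Dq hD⟩

private lemma sigma_nonneg {σ : ℝ → ℝ → ℝ} (hσ : IsKL σ) {s t : ℝ} (hs : 0 ≤ s) (ht : 0 ≤ t) :
    0 ≤ σ s t := by
  have h0 : σ 0 t = 0 := (hσ.2.1 t ht).2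
  rcases eq_or_lt_of_le hs with h | h
  · rw [← h, h0]
  · have := (hσ.2.1 t ht).1 (le_refl (0:ℝ)) (le_of_lt h) h
    simpa [h0] using this.le

private lemma sigma_mono_left {σ : ℝ → ℝ → ℝ} (hσ : IsKL σ) {s s' t : ℝ}
    (hs : 0 ≤ s) (hss : s ≤ s') (ht : 0 ≤ t) : σ s t ≤ σ s' t :=
  (hσ.2.1 t ht).1.monotoneOn hs (le_trans hs hss) hss

private lemma sigma_anti {σ : ℝ → ℝ → ℝ} (hσ : IsKL σ) {s t t' : ℝ}
    (hs : 0 ≤ s) (ht : 0 ≤ t) (htt : t ≤ t') : σ s t' ≤ σ s t :=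
  (hσ.2.2 s hs).1 ht (le_trans ht htt) htt

/-- The key Sontag-type estimate. -/
private lemma sontag_key {σ : ℝ → ℝ → ℝ} (hσ : IsKL σ) (Dq : ℕ → ℕ) (hD : Monotone Dq)
    (hkey : ∀ n i j : ℕ, n ≤ i → ((1:ℝ)/2)^i ≤ σ n j → j ≤ Dq i) :
    ∀ s : ℝ, 0 ≤ s → ∀ j : ℕ,
      aone Dq (σ s j) ≤ σ s 0 * Real.exp (Real.log 4 * Pfun Dq s) * ((1:ℝ)/4)^j := by
  intro s hs j
  set r := σ s (j:ℝ) with hrdef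
  have hr0 : 0 ≤ r := sigma_nonneg hσ hs (by positivity)
  have hRHS0 : 0 ≤ σ s 0 * Real.exp (Real.log 4 * Pfun Dq s) * ((1:ℝ)/4)^j := by
    have := sigma_nonneg hσ hs (le_refl 0)
    positivity
  rcases eq_or_lt_of_le hr0 with hr | hr
  · rw [← hr, aone_zero]; exact hRHS0
  -- main case: r > 0
  have hrs0 : r ≤ σ s 0 := sigma_anti hσ hs le_rfl (by positivity)
  set x := max 0 (-Real.logb 2 r) with hxdef
  have hx0 : 0 ≤ x := le_max_left _ _
  set i := ⌊x⌋₊ with hidef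
  set n := ⌊s⌋₊ + 1 with hndef
  have hsn : s ≤ (n:ℝ) := by
    have := (Nat.lt_floor_add_one s).le
    push_cast [hndef]; linarith
  have hrn : r ≤ σ n (j:ℝ) := sigma_mono_left hσ hs hsn (by positivity)
  -- lower bound on r
  have hr_lb : ((1:ℝ)/2)^(i+1) ≤ r := by
    have h1 : -Real.logb 2 r ≤ x := le_max_right _ _
    have h2 : x < i + 1 := by
      rw [hidef]; exact_mod_cast Nat.lt_floor_add_one x
    have h3 : -((i:ℝ) + 1) < Real.logb 2 r := by linarith
    have h4 : ((2:ℝ)) ^ (-((i:ℝ)+1)) ≤ (2:ℝ) ^ Real.logb 2 r := by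
      exact Real.rpow_le_rpow_left_iff (by norm_num : (1:ℝ) < 2) |>.2 h3.le
    rw [Real.rpow_logb (by norm_num) (by norm_num) hr] at h4
    calc ((1:ℝ)/2)^(i+1) = ((2:ℝ)^(i+1 : ℕ))⁻¹ := by
          rw [one_div, inv_pow]
      _ = (2:ℝ) ^ (-((i:ℝ)+1)) := by
          rw [Real.rpow_neg (by norm_num)]
          congr 1
          rw [← Real.rpow_natCast]
          push_cast
          ring_nf
      _ ≤ r := h4
  -- the key inequality on exponents
  have hkeyP : (j:ℝ) ≤ Pfun Dq x + Pfun Dq s := by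
    by_cases hni : n ≤ i + 1
    · have hq : ((1:ℝ)/2)^(i+1) ≤ σ n (j:ℝ) := le_trans hr_lb hrn
      have hjD : j ≤ Dq (i+1) := hkey n (i+1) j hni hq
      have hPx : (Dq (i+1) : ℝ) ≤ Pfun Dq x := by
        have := le_Pfun Dq hD hx0
        rwa [← hidef] at this
      have : (j:ℝ) ≤ Pfun Dq x := le_trans (by exact_mod_cast hjD) hPx
      linarith [Pfun_nonneg Dq hD s]
    · push_neg at hni
      have hq : ((1:ℝ)/2)^n ≤ σ n (j:ℝ) := by
        refine le_trans (le_trans ?_ hr_lb) hrn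
        exact pow_le_pow_of_le_one (by norm_num) (by norm_num) (by omega)
      have hjD : j ≤ Dq n := hkey n n j le_rfl hq
      have hPs : (Dq n : ℝ) ≤ Pfun Dq s := le_Pfun Dq hD hs
      have : (j:ℝ) ≤ Pfun Dq s := le_trans (by exact_mod_cast hjD) hPs
      linarith [Pfun_nonneg Dq hD x]
  -- conclude
  have hz : zeta Dq r ≤ Real.exp (Real.log 4 * Pfun Dq s) * ((1:ℝ)/4)^j := by
    have h14 : ((1:ℝ)/4) = Real.exp (-(Real.log 4)) := by
      rw [Real.exp_neg, Real.exp_log (by norm_num : (0:ℝ) < 4)]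
      norm_num
    have he : Real.exp (Real.log 4 * Pfun Dq s) * ((1:ℝ)/4)^j
        = Real.exp (Real.log 4 * Pfun Dq s - Real.log 4 * j) := by
      rw [h14, ← Real.exp_nat_mul, ← Real.exp_add]
      congr 1
      ring
    rw [he, zeta, Real.exp_le_exp, ← hxdef]
    have hL := log4_pos
    nlinarith [hkeyP]
  calc aone Dq r = r * zeta Dq r := rfl
    _ ≤ σ s 0 * (Real.exp (Real.log 4 * Pfun Dq s) * ((1:ℝ)/4)^j) := by
        refine mul_le_mul hrs0 hz (zeta_pos Dq r).le (sigma_nonneg hσ hs le_rfl)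
    _ = σ s 0 * Real.exp (Real.log 4 * Pfun Dq s) * ((1:ℝ)/4)^j := by ring

private def traj {X U D' Y' : Type*} (f : ℕ → D' → X → U → X) (k : ℕ → Y' → U)
    (h : ℕ → X → Y') (t : ℕ) (x : X) (d : ℕ → D') : ℕ → X
  | 0 => x
  | (j+1) => f (t+j) (d j) (traj f k h t x d j) (k (t+j) (h (t+j) (traj f k h t x d j)))

private def dcons {D' : Type*} (d0 : D') (d : ℕ → D') : ℕ → D'
  | 0 => d0
  | (m+1) => d m

private lemma traj_shift {X U D' Y' : Type*} (f : ℕ → D' → X → U → X) (k : ℕ → Y' → U)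
    (h : ℕ → X → Y') (t : ℕ) (x : X) (d0 : D') (d : ℕ → D') (j : ℕ) :
    traj f k h (t+1) (f t d0 x (k t (h t x))) d j = traj f k h t x (dcons d0 d) (j+1) := by
  induction j with
  | zero =>
      show f t d0 x (k t (h t x)) = f (t+0) (dcons d0 d 0) x (k (t+0) (h (t+0) x))
      rfl
  | succ j ih =>
      show f ((t+1)+j) (d j) (traj f k h (t+1) (f t d0 x (k t (h t x))) d j) _
          = f (t+(j+1)) (dcons d0 d (j+1)) (traj f k h t x (dcons d0 d) (j+1)) _
      rw [ih]
      have : (t+1)+j = t+(j+1) := by omega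
      rw [this]
      rfl

/-- Theorem 4.2: necessary Lyapunov-like conditions for the solvability of the
continuous static ROFS problem. -/
theorem thm42 {X Y Y' U D : Type*}
    [NormedAddCommGroup X] [NormedSpace ℝ X] [NormedAddCommGroup Y] [NormedSpace ℝ Y]
    [NormedAddCommGroup Y'] [NormedSpace ℝ Y'] [NormedAddCommGroup U] [NormedSpace ℝ U]
    [Nonempty D]
    (f : ℕ → D → X → U → X) (H : ℕ → X → Y) (h : ℕ → X → Y') (S : Set Y')
    (hf00 : ∀ (t : ℕ) (d : D), f t d 0 0 = 0)
    -- Hypothesis (A2)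
    (hA2 : ∀ (T : ℕ) (B : Set (X × U)), Bornology.IsBounded B → ∀ ε > (0 : ℝ),
      Bornology.IsBounded {y : X | ∃ t ≤ T, ∃ d : D, ∃ p ∈ B, y = f t d p.1 p.2} ∧
      ∃ δ > (0 : ℝ), ∀ t ≤ T, ∀ p ∈ B, ∀ p₀ ∈ B,
        ‖p.1 - p₀.1‖ + ‖p.2 - p₀.2‖ < δ →
        ∀ d : D, ‖f t d p.1 p.2 - f t d p₀.1 p₀.2‖ < ε)
    -- Hypothesis (H2)
    (hH0 : ∀ t : ℕ, H t 0 = 0)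
    (hH2 : ∀ (T : ℕ) (B : Set X), Bornology.IsBounded B → ∀ ε > (0 : ℝ),
      Bornology.IsBounded {y : Y | ∃ t ≤ T, ∃ x ∈ B, y = H t x} ∧
      ∃ δ > (0 : ℝ), ∀ t ≤ T, ∀ x ∈ B, ∀ x₀ ∈ B, ‖x - x₀‖ < δ → ‖H t x - H t x₀‖ < ε)
    -- Hypothesis (A3)
    (hhCU : MemCUOn (Set.univ : Set X) h) (hh0 : ∀ t : ℕ, h t 0 = 0)
    (hS : ∀ t : ℕ, h t '' Set.univ = S)
    (a₀ : Y' → Y') (ha₀cont : Continuous a₀)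
    (ha₀CU : ∀ (B : Set Y'), Bornology.IsBounded B → ∀ ε > (0 : ℝ),
      Bornology.IsBounded (a₀ '' B) ∧
      ∃ δ > (0 : ℝ), ∀ y ∈ B, ∀ y' ∈ B, ‖y - y'‖ < δ → ‖a₀ y - a₀ y'‖ < ε)
    (ha₀S : ∀ y : Y', a₀ y ∈ S) (ha₀id : ∀ y ∈ S, a₀ y = y)
    -- the stabilizing static output feedback
    (k : ℕ → Y' → U)
    (hkCU : MemCUOn S k)
    (hkeq : ∀ (t : ℕ) (d : D), f t d 0 (k t 0) = 0)
    (hCL : ∃ (σ : ℝ → ℝ → ℝ) (β : ℝ → ℝ), IsKL σ ∧ IsKPlus β ∧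
      ∀ (d : ℕ → D) (t₀ : ℕ) (x₀ : X) (x : ℕ → X), x t₀ = x₀ →
        (∀ t, t₀ ≤ t → x (t + 1) = f t (d t) (x t) (k t (h t (x t)))) →
        ∀ t, t₀ ≤ t → ‖H t (x t)‖ ≤ σ (β t₀ * ‖x₀‖) ((t : ℝ) - (t₀ : ℝ))) :
    ∃ (V : ℕ → X → ℝ) (a₁ a₂ β₁ β₂ : ℝ → ℝ) (lam : ℝ),
      MemCUOn (Set.univ : Set X) V ∧ (∀ (t : ℕ) (x : X), 0 ≤ V t x) ∧
      IsKInf a₁ ∧ IsKInf a₂ ∧ IsKPlus β₁ ∧ IsKPlus β₂ ∧ 0 < lam ∧ lam < 1 ∧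
      (∀ (t : ℕ) (x : X), a₁ ‖H t x‖ ≤ V t x ∧ V t x ≤ a₂ (β₂ t * ‖x‖)) ∧
      -- inequality (4.2b): the inf over u of the sup over h⁻¹(t,y) × D is ≤ 0
      (∀ (t : ℕ), ∀ y ∈ S, ∀ ε > (0 : ℝ), ∃ u : U,
        ∀ x : X, h t x = y → ∀ d : D, V (t + 1) (f t d x u) - lam * V t x ≤ ε) ∧
      -- inequality (4.2e), under the extra assumption k(t,0) = 0
      ((∀ t : ℕ, k t 0 = 0) →
        ∀ (t : ℕ) (x : X), h t x = 0 → ∀ d : D,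
          V (t + 1) (f t d x 0) - lam * V t x ≤ 0) := by
  classical
  obtain ⟨σ, β, hσ, hβ, hRG⟩ := hCL
  -- construct the decay-rate counting sequence Dq
  have hex : ∀ n i : ℕ, ∃ j : ℕ, σ n j < ((1:ℝ)/2)^i := by
    intro n i
    have ht := (hσ.2.2 n (by positivity)).2
    have hev := ht.eventually (gt_mem_nhds (show (0:ℝ) < (1/2:ℝ)^i by positivity))
    rcases Filter.eventually_atTop.1 hev with ⟨t₀, ht₀⟩
    refine ⟨⌈t₀⌉₊, ?_⟩
    have := ht₀ (⌈t₀⌉₊ : ℝ) (Nat.le_ceil t₀)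
    simpa using this
  set M : ℕ → ℕ → ℕ := fun n i => Nat.find (hex n i) with hMdef
  set Dq : ℕ → ℕ := fun i => (Finset.range (i+1)).sup (fun n => M n i) with hDqdef
  have hDmono : Monotone Dq := by
    intro i i' hii
    simp only [hDqdef]
    refine Finset.sup_le fun n hn => ?_
    have hn' := Finset.mem_range.1 hn
    have h1 : M n i ≤ M n i' :=
      Nat.find_mono (fun j hj => lt_of_lt_of_le hj
        (pow_le_pow_of_le_one (by norm_num) (by norm_num) hii))
    exact le_trans h1 (Finset.le_sup (f := fun n => M n i') (Finset.mem_range.2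
      (by omega : n < i' + 1)))
  have hkey : ∀ n i j : ℕ, n ≤ i → ((1:ℝ)/2)^i ≤ σ n j → j ≤ Dq i := by
    intro n i j hni hq
    have hjM : j < M n i := by
      by_contra hc
      push_neg at hc
      have h1 : σ n j ≤ σ n (M n i) :=
        sigma_anti hσ (by positivity) (by positivity) (by exact_mod_cast hc)
      have h2 : σ n (M n i) < ((1:ℝ)/2)^i := Nat.find_spec (hex n i)
      linarith
    have h3 : M n i ≤ Dq i := by
      rw [hDqdef]
      exact Finset.le_sup (f := fun n => M n i) (Finset.mem_range.2 (by omega : n < i + 1))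
    omega
  have sk := sontag_key hσ Dq hDmono hkey
  set L : ℝ := Real.log 4 with hLdef
  set Θ : ℝ → ℝ := fun s => σ s 0 * Real.exp (L/2 * Pfun Dq s) with hΘdef
  set Ψ : ℝ → ℝ := fun s => σ s 0 * Real.exp (L * Pfun Dq s) with hΨdef
  set tr : ℕ → X → (ℕ → D) → ℕ → X := traj f k h with htrdef
  -- RGAOS along closed-loop trajectories
  have htrb : ∀ (t : ℕ) (x : X) (d : ℕ → D) (j : ℕ),
      ‖H (t+j) (tr t x d j)‖ ≤ σ (β t * ‖x‖) j := by
    intro t x d j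
    have hinit : tr t x d (t - t) = x := by
      rw [htrdef]
      have : t - t = 0 := by omega
      rw [this]
      rfl
    have hrec : ∀ τ, t ≤ τ → tr t x d ((τ+1) - t)
        = f τ (d (τ - t)) (tr t x d (τ - t)) (k τ (h τ (tr t x d (τ - t)))) := by
      intro τ hτ
      have h1 : (τ+1) - t = (τ - t) + 1 := by omega
      have h2 : t + (τ - t) = τ := by omega
      rw [h1, htrdef]
      show f (t + (τ - t)) (d (τ - t)) _ _ = _
      rw [h2]
    have hcl := hRG (fun τ => d (τ - t)) t x (fun τ => tr t x d (τ - t)) hinit hrec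
      (t+j) (by omega)
    have hcl' : ‖H (t+j) (tr t x d ((t+j) - t))‖ ≤ σ (β t * ‖x‖) (((t+j : ℕ) : ℝ) - (t : ℝ)) := hcl
    have h3 : (t+j) - t = j := by omega
    rw [h3] at hcl'
    have h4 : ((t+j : ℕ) : ℝ) - (t : ℝ) = (j : ℝ) := by push_cast; ring
    rwa [h4] at hcl'
  have hΘmono : ∀ s s' : ℝ, 0 ≤ s → s ≤ s' → Θ s ≤ Θ s' := by
    intro s s' hs hss
    refine mul_le_mul (sigma_mono_left hσ hs hss le_rfl) ?_ (Real.exp_pos _).le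
      (sigma_nonneg hσ (le_trans hs hss) le_rfl)
    exact Real.exp_le_exp.2 (mul_le_mul_of_nonneg_left (Pfun_mono Dq hDmono hss)
      (by positivity))
  have hΘnn : ∀ s : ℝ, 0 ≤ s → 0 ≤ Θ s := fun s hs =>
    mul_nonneg (sigma_nonneg hσ hs le_rfl) (Real.exp_pos _).le
  set Vset : ℕ → X → Set ℝ :=
    fun t x => {r : ℝ | ∃ (j : ℕ) (d : ℕ → D), r = 2^j * aone Dq ‖H (t+j) (tr t x d j)‖}
    with hVsetdef
  set V : ℕ → X → ℝ := fun t x => sSup (Vset t x) with hVdef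
  have hsnn : ∀ (t : ℕ) (x : X), 0 ≤ β t * ‖x‖ := fun t x =>
    mul_nonneg (hβ.2 t (by positivity)).le (norm_nonneg x)
  have hne : ∀ (t : ℕ) (x : X), (Vset t x).Nonempty := by
    intro t x
    exact ⟨_, 0, Classical.arbitrary _, rfl⟩
  have hub : ∀ (t : ℕ) (x : X), ∀ r ∈ Vset t x, r ≤ Θ (β t * ‖x‖) := by
    intro t x r hr
    obtain ⟨j, dd, rfl⟩ := hr
    have hs : 0 ≤ β t * ‖x‖ := hsnn t x
    set s : ℝ := β t * ‖x‖ with hsdef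
    have hA0 : (0:ℝ) ≤ ‖H (t+j) (tr t x dd j)‖ := norm_nonneg _
    have hAσ : ‖H (t+j) (tr t x dd j)‖ ≤ σ s j := htrb t x dd j
    have haA : aone Dq ‖H (t+j) (tr t x dd j)‖ ≤ aone Dq (σ s j) :=
      aone_mono Dq hDmono hA0 hAσ
    have hσnn : 0 ≤ σ s j := sigma_nonneg hσ hs (by positivity)
    have hσ0nn : 0 ≤ σ s 0 := sigma_nonneg hσ hs le_rfl
    have h1 : aone Dq (σ s j) ≤ σ s 0 :=
      le_trans (aone_le_self Dq hDmono hσnn) (sigma_anti hσ hs le_rfl (by positivity))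
    have h2 : aone Dq (σ s j) ≤ σ s 0 * Real.exp (L * Pfun Dq s) * ((1:ℝ)/4)^j := sk s hs j
    have ha0 : 0 ≤ aone Dq (σ s j) := aone_nonneg Dq hσnn
    have haA0 : 0 ≤ aone Dq ‖H (t+j) (tr t x dd j)‖ := aone_nonneg Dq hA0
    have hr0 : (0:ℝ) ≤ 2^j * aone Dq ‖H (t+j) (tr t x dd j)‖ := by positivity
    have hΘs : 0 ≤ Θ s := hΘnn s hs
    have e1 : Θ s ^ 2 = σ s 0 ^ 2 * Real.exp (L * Pfun Dq s) := by
      simp only [hΘdef]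
      rw [mul_pow, sq (Real.exp _), ← Real.exp_add]
      congr 2
      ring
    have haa : aone Dq ‖H (t+j) (tr t x dd j)‖ ^ 2
        ≤ σ s 0 * (σ s 0 * Real.exp (L * Pfun Dq s) * ((1:ℝ)/4)^j) := by
      rw [sq]
      exact mul_le_mul (le_trans haA h1) (le_trans haA h2) haA0 hσ0nn
    have hsq : (2^j * aone Dq ‖H (t+j) (tr t x dd j)‖) ^ 2 ≤ Θ s ^ 2 := by
      have hc : ((2:ℝ)^j * aone Dq ‖H (t+j) (tr t x dd j)‖) ^ 2
          = (4:ℝ)^j * aone Dq ‖H (t+j) (tr t x dd j)‖ ^ 2 := by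
        rw [mul_pow, ← pow_mul, mul_comm j 2, pow_mul]
        norm_num
      rw [hc, e1]
      calc (4:ℝ)^j * aone Dq ‖H (t+j) (tr t x dd j)‖ ^ 2
          ≤ (4:ℝ)^j * (σ s 0 * (σ s 0 * Real.exp (L * Pfun Dq s) * ((1:ℝ)/4)^j)) := by
            refine mul_le_mul_of_nonneg_left haa (by positivity)
        _ = σ s 0 ^ 2 * Real.exp (L * Pfun Dq s) * ((4:ℝ) * ((1:ℝ)/4))^j := by
            rw [mul_pow]; ring
        _ = σ s 0 ^ 2 * Real.exp (L * Pfun Dq s) := by norm_num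
    have := Real.sqrt_le_sqrt hsq
    rwa [Real.sqrt_sq hr0, Real.sqrt_sq hΘs] at this
  have hbdd : ∀ (t : ℕ) (x : X), BddAbove (Vset t x) := fun t x => ⟨_, hub t x⟩
  have hVub : ∀ (t : ℕ) (x : X), V t x ≤ Θ (β t * ‖x‖) := fun t x =>
    csSup_le (hne t x) (hub t x)
  have hVlb : ∀ (t : ℕ) (x : X), aone Dq ‖H t x‖ ≤ V t x := by
    intro t x
    have hmem : aone Dq ‖H t x‖ ∈ Vset t x := by
      refine ⟨0, Classical.arbitrary _, ?_⟩
      simp [htrdef, traj]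
    exact le_csSup (hbdd t x) hmem
  have hV0 : ∀ (t : ℕ) (x : X), 0 ≤ V t x := fun t x =>
    le_trans (aone_nonneg Dq (norm_nonneg _)) (hVlb t x)
  have hVeq : ∀ (t : ℕ) (x : X), V t x = sSup (Vset t x) := fun _ _ => rfl
  have hdec : ∀ (t : ℕ) (x : X) (d0 : D),
      V (t+1) (f t d0 x (k t (h t x))) ≤ (1/2) * V t x := by
    intro t x d0
    rw [hVeq]
    refine csSup_le (hne _ _) ?_
    rintro r ⟨j, dd, rfl⟩
    have hsh := traj_shift f k h t x d0 dd j
    rw [← htrdef] at hsh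
    rw [hsh]
    have h1 : (t+1)+j = t+(j+1) := by omega
    rw [h1]
    have hmem : (2:ℝ)^(j+1) * aone Dq ‖H (t+(j+1)) (tr t x (dcons d0 dd) (j+1))‖
        ∈ Vset t x := ⟨j+1, dcons d0 dd, rfl⟩
    have hle := le_csSup (hbdd t x) hmem
    rw [← hVeq] at hle
    have h2 : (2:ℝ)^j * aone Dq ‖H (t+(j+1)) (tr t x (dcons d0 dd) (j+1))‖
        = 1/2 * ((2:ℝ)^(j+1) * aone Dq ‖H (t+(j+1)) (tr t x (dcons d0 dd) (j+1))‖) := by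
      ring
    rw [h2]
    linarith
  have hβbound : ∀ (T : ℕ) (R : ℝ), 0 ≤ R → ∃ s', 0 ≤ s' ∧ ∀ t : ℕ, t ≤ T →
      ∀ x : X, ‖x‖ ≤ R → β t * ‖x‖ ≤ s' := by
    intro T R hR
    have hne' : (Finset.range (T+1)).Nonempty := ⟨0, Finset.mem_range.2 (by omega)⟩
    set bm := (Finset.range (T+1)).sup' hne' (fun t : ℕ => β t) with hbm
    have hbm0 : 0 ≤ bm := by
      have h0 : β ((0:ℕ):ℝ) ≤ bm := by
        rw [hbm]
        exact Finset.le_sup' (f := fun t : ℕ => β (t:ℝ)) (Finset.mem_range.2 (by omega : 0 < T + 1))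
      have h0' := hβ.2 0 le_rfl
      push_cast at h0
      linarith
    refine ⟨bm * R, mul_nonneg hbm0 hR, fun t ht x hx => ?_⟩
    have h1 : β t ≤ bm := by
      rw [hbm]
      exact Finset.le_sup' (f := fun t : ℕ => β (t:ℝ)) (Finset.mem_range.2 (by omega : t < T + 1))
    exact mul_le_mul h1 hx (norm_nonneg x) hbm0
  have hΨmono : ∀ s s' : ℝ, 0 ≤ s → s ≤ s' → Ψ s ≤ Ψ s' := by
    intro s s' hs hss
    refine mul_le_mul (sigma_mono_left hσ hs hss le_rfl) ?_ (Real.exp_pos _).le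
      (sigma_nonneg hσ (le_trans hs hss) le_rfl)
    exact Real.exp_le_exp.2 (mul_le_mul_of_nonneg_left (Pfun_mono Dq hDmono hss)
      log4_pos.le)
  have hΨnn : ∀ s : ℝ, 0 ≤ s → 0 ≤ Ψ s := fun s hs =>
    mul_nonneg (sigma_nonneg hσ hs le_rfl) (Real.exp_pos _).le
  -- bounded / uniformly-continuous trajectories on bounded sets, finite horizon
  have trajBU : ∀ (T : ℕ) (R : ℝ), 0 ≤ R → ∀ j : ℕ,
      (∃ Rj, 0 ≤ Rj ∧ ∀ t ≤ T, ∀ x : X, ‖x‖ ≤ R → ∀ d : ℕ → D, ‖tr t x d j‖ ≤ Rj) ∧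
      (∀ ε > (0:ℝ), ∃ δ > (0:ℝ), ∀ t ≤ T, ∀ x x' : X, ‖x‖ ≤ R → ‖x'‖ ≤ R →
        ‖x - x'‖ < δ → ∀ d : ℕ → D, ‖tr t x d j - tr t x' d j‖ < ε) := by
    intro T R hR j
    induction j with
    | zero =>
        constructor
        · exact ⟨R, hR, fun t ht x hx d => by rw [htrdef]; exact hx⟩
        · intro ε hε
          exact ⟨ε, hε, fun t ht x x' hx hx' hxx d => by rw [htrdef]; exact hxx⟩
    | succ j ih =>
        obtain ⟨⟨Rj, hRj0, hRjb⟩, ihuc⟩ := ih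
        set Bz : Set X := {z : X | ‖z‖ ≤ Rj} with hBzdef
        have hBzb : Bornology.IsBounded Bz :=
          isBounded_iff_forall_norm_le.2 ⟨Rj, fun z hz => hz⟩
        obtain ⟨hhb, -⟩ := hhCU.2 (T+j) Bz (Set.subset_univ _) hBzb 1 one_pos
        obtain ⟨Rh, hRh⟩ := isBounded_iff_forall_norm_le.1 hhb
        have hhval : ∀ τ, τ ≤ T+j → ∀ z ∈ Bz, ‖h τ z‖ ≤ Rh := fun τ hτ z hz =>
          hRh _ ⟨τ, hτ, z, hz, rfl⟩
        set By : Set Y' := {w : Y' | ‖w‖ ≤ Rh} ∩ S with hBydef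
        have hByb : Bornology.IsBounded By :=
          (isBounded_iff_forall_norm_le.2 ⟨Rh, fun z hz => hz⟩).subset Set.inter_subset_left
        have hmemS : ∀ (τ : ℕ) (z : X), h τ z ∈ S := fun τ z => by
          rw [← hS τ]; exact ⟨z, Set.mem_univ z, rfl⟩
        obtain ⟨hkb, -⟩ := hkCU.2 (T+j) By Set.inter_subset_right hByb 1 one_pos
        obtain ⟨Rk, hRk⟩ := isBounded_iff_forall_norm_le.1 hkb
        have hkval : ∀ τ, τ ≤ T+j → ∀ z ∈ Bz, ‖k τ (h τ z)‖ ≤ Rk := fun τ hτ z hz =>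
          hRk _ ⟨τ, hτ, h τ z, ⟨hhval τ hτ z hz, hmemS τ z⟩, rfl⟩
        set Bp : Set (X × U) := {p : X × U | ‖p.1‖ ≤ Rj ∧ ‖p.2‖ ≤ Rk} with hBpdef
        have hBpb : Bornology.IsBounded Bp := by
          refine isBounded_iff_forall_norm_le.2 ⟨max Rj Rk, fun p hp => ?_⟩
          rw [Prod.norm_def]
          exact max_le_max hp.1 hp.2
        have hmemBp : ∀ t, t ≤ T → ∀ x : X, ‖x‖ ≤ R → ∀ d : ℕ → D,
            (tr t x d j, k (t+j) (h (t+j) (tr t x d j))) ∈ Bp := by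
          intro t ht x hx d
          exact ⟨hRjb t ht x hx d, hkval (t+j) (by omega) _ (hRjb t ht x hx d)⟩
        have htr_eq : ∀ (t : ℕ) (x : X) (d : ℕ → D), tr t x d (j+1)
            = f (t+j) (d j) (tr t x d j) (k (t+j) (h (t+j) (tr t x d j))) := by
          intro t x d
          rw [htrdef]
          rfl
        constructor
        · obtain ⟨hfb, -⟩ := hA2 (T+j) Bp hBpb 1 one_pos
          obtain ⟨Rf, hRf⟩ := isBounded_iff_forall_norm_le.1 hfb
          refine ⟨max Rf 0, le_max_right _ _, fun t ht x hx d => ?_⟩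
          have hmem : tr t x d (j+1)
              ∈ {y : X | ∃ τ ≤ T+j, ∃ d' : D, ∃ p ∈ Bp, y = f τ d' p.1 p.2} := by
            refine ⟨t+j, by omega, d j, _, hmemBp t ht x hx d, ?_⟩
            exact htr_eq t x d
          exact le_trans (hRf _ hmem) (le_max_left _ _)
        · intro ε hε
          obtain ⟨-, δ₁, hδ₁0, hδ₁⟩ := hA2 (T+j) Bp hBpb ε hε
          obtain ⟨-, δ₂, hδ₂0, hδ₂⟩ := hkCU.2 (T+j) By Set.inter_subset_right hByb
            (δ₁/2) (by linarith)
          obtain ⟨-, δ₃, hδ₃0, hδ₃⟩ := hhCU.2 (T+j) Bz (Set.subset_univ _) hBzb δ₂ hδ₂0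
          obtain ⟨δ₀, hδ₀0, hδ₀⟩ := ihuc (min δ₃ (δ₁/2)) (by positivity)
          refine ⟨δ₀, hδ₀0, fun t ht x x' hx hx' hxx d => ?_⟩
          have hzz := hδ₀ t ht x x' hx hx' hxx d
          have hzB := hRjb t ht x hx d
          have hzB' := hRjb t ht x' hx' d
          have hyy : ‖h (t+j) (tr t x d j) - h (t+j) (tr t x' d j)‖ < δ₂ :=
            hδ₃ (t+j) (by omega) _ hzB _ hzB' (lt_of_lt_of_le hzz (min_le_left _ _))
          have hyB : h (t+j) (tr t x d j) ∈ By :=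
            ⟨hhval (t+j) (by omega) _ hzB, hmemS _ _⟩
          have hyB' : h (t+j) (tr t x' d j) ∈ By :=
            ⟨hhval (t+j) (by omega) _ hzB', hmemS _ _⟩
          have huu : ‖k (t+j) (h (t+j) (tr t x d j)) - k (t+j) (h (t+j) (tr t x' d j))‖
              < δ₁/2 := hδ₂ (t+j) (by omega) _ hyB _ hyB' hyy
          have hsum : ‖tr t x d j - tr t x' d j‖
              + ‖k (t+j) (h (t+j) (tr t x d j)) - k (t+j) (h (t+j) (tr t x' d j))‖ < δ₁ := by
            have := lt_of_lt_of_le hzz (min_le_right _ _)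
            linarith
          have hff := hδ₁ (t+j) (by omega) _ (hmemBp t ht x hx d) _ (hmemBp t ht x' hx' d)
            hsum (d j)
          rw [htr_eq t x d, htr_eq t x' d]
          exact hff
  -- the master uniform-continuity statement
  have master : ∀ (T : ℕ) (R : ℝ), 0 ≤ R → ∀ ε > (0:ℝ), ∃ δ > (0:ℝ), ∀ t ≤ T,
      ∀ x x' : X, ‖x‖ ≤ R → ‖x'‖ ≤ R → ‖x - x'‖ < δ → |V t x - V t x'| < ε := by
    intro T R hR ε hε
    obtain ⟨s', hs'0, hs'⟩ := hβbound T R hR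
    have hC0 : 0 ≤ Ψ s' := hΨnn s' hs'0
    obtain ⟨J, hJ⟩ := exists_pow_lt_of_lt_one
      (show (0:ℝ) < ε/4/(Ψ s'+1) by positivity) (show (1:ℝ)/2 < 1 by norm_num)
    have tail : ∀ t, t ≤ T → ∀ x : X, ‖x‖ ≤ R → ∀ j : ℕ, J ≤ j → ∀ d : ℕ → D,
        2^j * aone Dq ‖H (t+j) (tr t x d j)‖ ≤ ε/4 := by
      intro t ht x hx j hj d
      have hs : 0 ≤ β t * ‖x‖ := hsnn t x
      have h1 : aone Dq ‖H (t+j) (tr t x d j)‖ ≤ aone Dq (σ (β t * ‖x‖) j) :=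
        aone_mono Dq hDmono (norm_nonneg _) (htrb t x d j)
      have h2 := sk (β t * ‖x‖) hs j
      calc 2^j * aone Dq ‖H (t+j) (tr t x d j)‖
          ≤ 2^j * (Ψ (β t * ‖x‖) * ((1:ℝ)/4)^j) := by
            refine mul_le_mul_of_nonneg_left ?_ (by positivity)
            rw [hΨdef]
            exact le_trans h1 h2
        _ = Ψ (β t * ‖x‖) * ((2:ℝ) * ((1:ℝ)/4))^j := by rw [mul_pow]; ring
        _ = Ψ (β t * ‖x‖) * ((1:ℝ)/2)^j := by norm_num
        _ ≤ (Ψ s' + 1) * ((1:ℝ)/2)^J := by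
            refine mul_le_mul ?_ (pow_le_pow_of_le_one (by norm_num) (by norm_num) hj)
              (by positivity) (by linarith)
            have := hΨmono _ _ hs (hs' t ht x hx)
            linarith
        _ ≤ (Ψ s' + 1) * (ε/4/(Ψ s'+1)) := by
            refine mul_le_mul_of_nonneg_left hJ.le (by linarith)
        _ = ε/4 := by field_simp
    have termUC : ∀ j : ℕ, ∃ δ > (0:ℝ), ∀ t ≤ T, ∀ x x' : X, ‖x‖ ≤ R → ‖x'‖ ≤ R →
        ‖x - x'‖ < δ → ∀ d : ℕ → D,
        |2^j * aone Dq ‖H (t+j) (tr t x d j)‖ - 2^j * aone Dq ‖H (t+j) (tr t x' d j)‖|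
          < ε/4 := by
      intro j
      obtain ⟨⟨Rj, hRj0, hRjb⟩, ihuc⟩ := trajBU T R hR j
      set Bz : Set X := {z : X | ‖z‖ ≤ Rj} with hBzdef
      have hBzb : Bornology.IsBounded Bz :=
        isBounded_iff_forall_norm_le.2 ⟨Rj, fun z hz => hz⟩
      obtain ⟨hHb, -⟩ := hH2 (T+j) Bz hBzb 1 one_pos
      obtain ⟨Rh, hRh⟩ := isBounded_iff_forall_norm_le.1 hHb
      set RH : ℝ := max Rh 0 with hRHdef
      have hHval : ∀ t, t ≤ T → ∀ x : X, ‖x‖ ≤ R → ∀ d : ℕ → D,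
          ‖H (t+j) (tr t x d j)‖ ∈ Set.Icc (0:ℝ) RH := by
        intro t ht x hx d
        refine ⟨norm_nonneg _, le_trans (hRh _ ⟨t+j, by omega, _, hRjb t ht x hx d, rfl⟩)
          (le_max_left _ _)⟩
      have hucA := (isCompact_Icc (a := (0:ℝ)) (b := RH)).uniformContinuousOn_of_continuous
        ((aone_continuousOn Dq hDmono).mono (fun z hz => hz.1))
      rw [Metric.uniformContinuousOn_iff] at hucA
      have hεa0 : (0:ℝ) < ε/4/2^j := by positivity
      obtain ⟨δa, hδa0, hδa⟩ := hucA (ε/4/2^j) hεa0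
      obtain ⟨-, δH, hδH0, hδH⟩ := hH2 (T+j) Bz hBzb δa hδa0
      obtain ⟨δ, hδ0, hδ⟩ := ihuc δH hδH0
      refine ⟨δ, hδ0, fun t ht x x' hx hx' hxx d => ?_⟩
      have hzB := hRjb t ht x hx d
      have hzB' := hRjb t ht x' hx' d
      have hHH : ‖H (t+j) (tr t x d j) - H (t+j) (tr t x' d j)‖ < δa :=
        hδH (t+j) (by omega) _ hzB _ hzB' (hδ t ht x x' hx hx' hxx d)
      have hdist : dist ‖H (t+j) (tr t x d j)‖ ‖H (t+j) (tr t x' d j)‖ < δa := by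
        rw [Real.dist_eq]
        exact lt_of_le_of_lt (abs_norm_sub_norm_le _ _) hHH
      have habs := hδa _ (hHval t ht x hx d) _ (hHval t ht x' hx' d) hdist
      rw [Real.dist_eq] at habs
      calc |2^j * aone Dq ‖H (t+j) (tr t x d j)‖ - 2^j * aone Dq ‖H (t+j) (tr t x' d j)‖|
          = 2^j * |aone Dq ‖H (t+j) (tr t x d j)‖ - aone Dq ‖H (t+j) (tr t x' d j)‖| := by
            rw [← mul_sub, abs_mul, abs_of_nonneg (by positivity : (0:ℝ) ≤ (2:ℝ)^j)]
        _ < 2^j * (ε/4/2^j) := by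
            exact mul_lt_mul_of_pos_left habs (by positivity)
        _ = ε/4 := by field_simp
    have hcomb : ∀ Jm : ℕ, ∃ δ > (0:ℝ), ∀ j ≤ Jm, ∀ t ≤ T, ∀ x x' : X, ‖x‖ ≤ R →
        ‖x'‖ ≤ R → ‖x - x'‖ < δ → ∀ d : ℕ → D,
        |2^j * aone Dq ‖H (t+j) (tr t x d j)‖ - 2^j * aone Dq ‖H (t+j) (tr t x' d j)‖|
          < ε/4 := by
      intro Jm
      induction Jm with
      | zero =>
          obtain ⟨δ, hδ0, hδ⟩ := termUC 0
          refine ⟨δ, hδ0, fun j hj => ?_⟩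
          have : j = 0 := by omega
          subst this
          exact hδ
      | succ m ihm =>
          obtain ⟨δ₁, hδ₁0, hδ₁⟩ := ihm
          obtain ⟨δ₂, hδ₂0, hδ₂⟩ := termUC (m+1)
          refine ⟨min δ₁ δ₂, by positivity, fun j hj t ht x x' hx hx' hxx d => ?_⟩
          rcases Nat.lt_or_ge j (m+1) with hc | hc
          · exact hδ₁ j (by omega) t ht x x' hx hx'
              (lt_of_lt_of_le hxx (min_le_left _ _)) d
          · have : j = m+1 := by omega
            subst this
            exact hδ₂ t ht x x' hx hx' (lt_of_lt_of_le hxx (min_le_right _ _)) d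
    obtain ⟨δ, hδ0, hδ⟩ := hcomb J
    refine ⟨δ, hδ0, fun t ht x x' hx hx' hxx => ?_⟩
    have hone : ∀ z z' : X, ‖z‖ ≤ R → ‖z'‖ ≤ R → ‖z - z'‖ < δ → V t z ≤ V t z' + ε/2 := by
      intro z z' hz hz' hzz
      rw [hVeq]
      refine csSup_le (hne _ _) ?_
      rintro r ⟨j, dd, rfl⟩
      rcases le_or_gt j J with hj | hj
      · have h1 := hδ j hj t ht z z' hz hz' hzz dd
        have h2 : 2^j * aone Dq ‖H (t+j) (tr t z' dd j)‖ ≤ V t z' := by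
          rw [hVeq]
          exact le_csSup (hbdd _ _) ⟨j, dd, rfl⟩
        have h3 := le_abs_self (2^j * aone Dq ‖H (t+j) (tr t z dd j)‖
          - 2^j * aone Dq ‖H (t+j) (tr t z' dd j)‖)
        have hε4 : (0:ℝ) < ε/4 := by positivity
        linarith
      · have h1 := tail t ht z hz j hj.le dd
        have h2 := hV0 t z'
        linarith
    have h1 := hone x x' hx hx' hxx
    have h2 := hone x' x hx' hx (by rwa [norm_sub_rev])
    rw [abs_sub_lt_iff]
    constructor <;> linarith
  -- assemble the answer
  refine ⟨V, aone Dq, fun z => z + Θ z, fun _ => 1, β, 1/2, ?_, hV0,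
    aone_isKInf Dq hDmono, ?_, ⟨continuousOn_const, fun _ _ => one_pos⟩, hβ,
    by norm_num, by norm_num, ?_, ?_, ?_⟩
  · -- MemCUOn V
    constructor
    · intro t
      have hcont : Continuous (V t) := by
        rw [Metric.continuous_iff]
        intro x₀ ε hε
        obtain ⟨δ, hδ0, hδ⟩ := master t (‖x₀‖ + 1) (by positivity) ε hε
        refine ⟨min δ 1, by positivity, fun x hx => ?_⟩
        have hd : ‖x - x₀‖ < min δ 1 := by rwa [← dist_eq_norm]
        have hx1 : ‖x‖ ≤ ‖x₀‖ + 1 := by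
          have h1 : ‖x - x₀‖ < 1 := lt_of_lt_of_le hd (min_le_right _ _)
          have h2 := norm_sub_norm_le x x₀
          linarith
        have hx0' : ‖x₀‖ ≤ ‖x₀‖ + 1 := by linarith
        have := hδ t le_rfl x x₀ hx1 hx0' (lt_of_lt_of_le hd (min_le_left _ _))
        rwa [Real.dist_eq]
      exact hcont.continuousOn
    · intro T B hBsub hBb ε hε
      obtain ⟨R0, hR0⟩ := isBounded_iff_forall_norm_le.1 hBb
      have hR : (0:ℝ) ≤ max R0 0 := le_max_right _ _
      have hRB : ∀ z ∈ B, ‖z‖ ≤ max R0 0 := fun z hz =>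
        le_trans (hR0 z hz) (le_max_left _ _)
      constructor
      · obtain ⟨s', hs'0, hs'⟩ := hβbound T (max R0 0) hR
        refine (Metric.isBounded_Icc (0:ℝ) (Θ s')).subset ?_
        rintro w ⟨t, ht, z, hz, rfl⟩
        exact ⟨hV0 t z, le_trans (hVub t z)
          (hΘmono _ _ (hsnn t z) (hs' t ht z (hRB z hz)))⟩
      · obtain ⟨δ, hδ0, hδ⟩ := master T (max R0 0) hR ε hε
        refine ⟨δ, hδ0, fun t ht z hz z' hz' hzz => ?_⟩
        rw [Real.norm_eq_abs]
        exact hδ t ht z z' (hRB z hz) (hRB z' hz') hzz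
  · -- IsKInf a₂
    have hΘcont : ContinuousOn Θ (Set.Ici 0) := by
      rw [hΘdef]
      refine ContinuousOn.mul ?_ ?_
      · have hc2 : Continuous (fun z : ℝ => (z, (0:ℝ))) := continuous_id.prodMk continuous_const
        have hm : Set.MapsTo (fun z : ℝ => (z, (0:ℝ))) (Set.Ici 0) (Set.Ici (0:ℝ) ×ˢ Set.Ici (0:ℝ)) :=
          fun z hz => by refine Set.mem_prod.2 ⟨?_, ?_⟩ <;> simpa using hz
        exact hσ.1.comp hc2.continuousOn hm
      · exact (Real.continuous_exp.comp (continuous_const.mul (Pfun_continuous Dq))).continuousOn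
    refine ⟨(continuous_id'.continuousOn).add hΘcont, ?_, ?_, ?_⟩
    · intro a ha b hb hab
      have := hΘmono a b ha hab.le
      show a + Θ a < b + Θ b
      linarith
    · show (0:ℝ) + Θ 0 = 0
      have h00 : σ 0 0 = 0 := (hσ.2.1 0 le_rfl).2
      simp [hΘdef, h00]
    · refine tendsto_atTop_mono' Filter.atTop ?_ tendsto_id
      filter_upwards [Filter.eventually_ge_atTop (0:ℝ)] with r hr
      have := hΘnn r hr
      show r ≤ r + Θ r
      linarith
  · -- sandwich bounds
    intro t x
    refine ⟨hVlb t x, ?_⟩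
    show V t x ≤ β ↑t * ‖x‖ + Θ (β ↑t * ‖x‖)
    have h1 := hVub t x
    have h2 := hΘnn _ (hsnn t x)
    have h3 := hsnn t x
    linarith
  · -- (4.2b)
    intro t y hy ε hε
    refine ⟨k t y, fun x hx d => ?_⟩
    have : f t d x (k t y) = f t d x (k t (h t x)) := by rw [hx]
    rw [this]
    have := hdec t x d
    have := hV0 t x
    linarith
  · -- (4.2e)
    intro hk0 t x hx d
    have : f t d x 0 = f t d x (k t (h t x)) := by rw [hx, hk0]
    rw [this]
    have := hdec t x d
    have := hV0 t x
    linarith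
end
end

section
/- Example 2.3 (RGAOS of system (2.18)). Consider the discrete-time system on ℝ²: x₁(t+1) = d(t)·x₁(t), x₂(t+1) = 2^{−t}·d(t)·|x₁(t)|^{1/2}, with output Y(t) = x₂(t), where d(t) ∈ [−2, 2] for all t ∈ ℕ. Then this system is non-uniformly in time RGAOS; that is, there exist σ ∈ KL and β ∈ K⁺ such that for every disturbance sequence d : ℕ → [−2,2], every t₀ ∈ ℕ and every x₀ = (x₁(t₀), x₂(t₀)) ∈ ℝ², the solution satisfies |x₂(t)| ≤ σ(β(t₀)·|x₀|, t − t₀) for all t ≥ t₀, where |x₀| is the Euclidean norm of x₀. -/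
open Filter Topology Bornology Set

noncomputable section

lemma mySigma_KL : IsKL (fun s t => (2:ℝ) ^ ((3 - t)/2) * (s + Real.sqrt s)) := by
  refine ⟨?_, ?_, ?_⟩
  · apply Continuous.continuousOn
    have h1 : Continuous fun p : ℝ × ℝ => (2:ℝ) ^ ((3 - p.2)/2) :=
      continuous_const.rpow (by continuity) (fun x => Or.inl two_ne_zero)
    exact h1.mul ((continuous_fst).add (Real.continuous_sqrt.comp continuous_fst))
  · intro t _
    constructor
    · intro a _ b _ hab
      have hpos : (0:ℝ) < (2:ℝ) ^ ((3 - t)/2) := Real.rpow_pos_of_pos two_pos _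
      exact mul_lt_mul_of_pos_left
        (add_lt_add_of_lt_of_le hab (Real.sqrt_le_sqrt hab.le)) hpos
    · simp
  · intro s hs
    constructor
    · intro a _ b _ hab
      have h1 : (2:ℝ) ^ ((3 - b)/2) ≤ (2:ℝ) ^ ((3 - a)/2) :=
        Real.rpow_le_rpow_of_exponent_le one_le_two (by linarith)
      have h2 : 0 ≤ s + Real.sqrt s := by positivity
      exact mul_le_mul_of_nonneg_right h1 h2
    · have hbase : Tendsto (fun t : ℝ => (2:ℝ) ^ ((3 - t)/2)) atTop (nhds 0) := by
        have heq : (fun t : ℝ => (2:ℝ) ^ ((3 - t)/2)) =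
            fun t : ℝ => Real.exp (Real.log 2 * ((3 - t)/2)) := by
          funext t; rw [Real.rpow_def_of_pos two_pos]
        rw [heq]
        apply Real.tendsto_exp_atBot.comp
        apply Tendsto.const_mul_atBot (Real.log_pos one_lt_two)
        apply Tendsto.atBot_div_const two_pos
        simpa only [← sub_eq_add_neg] using
          tendsto_atBot_add_const_left atTop (3:ℝ) tendsto_neg_atTop_atBot
      simpa using hbase.mul_const (s + Real.sqrt s)

/-- Example 2.3: system (2.18) is non-uniformly in time RGAOS. -/
theorem example23_RGAOS :
    ∃ (σ : ℝ → ℝ → ℝ) (β : ℝ → ℝ), IsKL σ ∧ IsKPlus β ∧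
      ∀ (d : ℕ → ℝ), (∀ t : ℕ, d t ∈ Set.Icc (-2 : ℝ) 2) →
        ∀ (t₀ : ℕ) (x₁ x₂ : ℕ → ℝ),
          (∀ t, t₀ ≤ t →
            x₁ (t + 1) = d t * x₁ t ∧
            x₂ (t + 1) = (2 : ℝ) ^ (-(t : ℝ)) * d t * |x₁ t| ^ ((1 : ℝ) / 2)) →
          ∀ t, t₀ ≤ t →
            |x₂ t| ≤ σ (β t₀ * Real.sqrt ((x₁ t₀) ^ 2 + (x₂ t₀) ^ 2))
              ((t : ℝ) - (t₀ : ℝ)) := by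
  refine ⟨fun s t => (2:ℝ) ^ ((3 - t)/2) * (s + Real.sqrt s), fun _ => 1,
    mySigma_KL, ⟨continuousOn_const, fun _ _ => one_pos⟩, ?_⟩
  intro d hd t₀ x₁ x₂ hsys t ht
  set r : ℝ := Real.sqrt ((x₁ t₀) ^ 2 + (x₂ t₀) ^ 2) with hr
  have hr0 : 0 ≤ r := Real.sqrt_nonneg _
  have hx1r : |x₁ t₀| ≤ r := by
    rw [hr, ← Real.sqrt_sq_eq_abs]
    exact Real.sqrt_le_sqrt (by nlinarith [sq_nonneg (x₂ t₀)])
  have hx2r : |x₂ t₀| ≤ r := by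
    rw [hr, ← Real.sqrt_sq_eq_abs]
    exact Real.sqrt_le_sqrt (by nlinarith [sq_nonneg (x₁ t₀)])
  -- growth bound on x₁
  have hgrow : ∀ n, t₀ ≤ n → |x₁ n| ≤ (2:ℝ) ^ ((n:ℝ) - (t₀:ℝ)) * |x₁ t₀| := by
    intro n hn
    induction n, hn using Nat.le_induction with
    | base => simp
    | succ n hn ih =>
      have h1 : x₁ (n + 1) = d n * x₁ n := (hsys n hn).1
      have hdn : |d n| ≤ 2 := abs_le.mpr ⟨(hd n).1, (hd n).2⟩
      calc |x₁ (n+1)| = |d n| * |x₁ n| := by rw [h1, abs_mul]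
        _ ≤ 2 * ((2:ℝ) ^ ((n:ℝ) - (t₀:ℝ)) * |x₁ t₀|) := by
            apply mul_le_mul hdn ih (abs_nonneg _) (by norm_num)
        _ = (2:ℝ) ^ ((↑(n+1):ℝ) - (t₀:ℝ)) * |x₁ t₀| := by
            rw [show ((↑(n+1):ℝ) - (t₀:ℝ)) = 1 + ((n:ℝ) - (t₀:ℝ)) by push_cast; ring,
              Real.rpow_add two_pos, Real.rpow_one, mul_assoc]
  simp only [one_mul]
  rcases eq_or_lt_of_le ht with heq | hlt
  · -- t = t₀
    subst heq
    have h1 : (1:ℝ) ≤ (2:ℝ) ^ ((3 - ((t₀:ℝ) - (t₀:ℝ)))/2) := by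
      rw [show ((t₀:ℝ) - (t₀:ℝ)) = 0 by ring]
      rw [show (1:ℝ) = (2:ℝ) ^ (0:ℝ) by rw [Real.rpow_zero]]
      exact Real.rpow_le_rpow_of_exponent_le one_le_two (by norm_num)
    calc |x₂ t₀| ≤ r := hx2r
      _ ≤ r + Real.sqrt r := le_add_of_nonneg_right (Real.sqrt_nonneg _)
      _ ≤ (2:ℝ) ^ ((3 - ((t₀:ℝ) - (t₀:ℝ)))/2) * (r + Real.sqrt r) :=
          le_mul_of_one_le_left (by positivity) h1
  · -- t₀ < t, so t = n+1 with t₀ ≤ n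
    obtain ⟨n, rfl⟩ : ∃ n, t = n + 1 := ⟨t - 1, by omega⟩
    have hn : t₀ ≤ n := by omega
    have h2 : x₂ (n + 1) = (2 : ℝ) ^ (-(n : ℝ)) * d n * |x₁ n| ^ ((1 : ℝ) / 2) :=
      (hsys n hn).2
    have hdn : |d n| ≤ 2 := abs_le.mpr ⟨(hd n).1, (hd n).2⟩
    have hxn : |x₁ n| ^ ((1:ℝ)/2) ≤ (2:ℝ) ^ (((n:ℝ) - (t₀:ℝ))/2) * Real.sqrt r := by
      have h3 : |x₁ n| ≤ (2:ℝ) ^ ((n:ℝ) - (t₀:ℝ)) * r :=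
        (hgrow n hn).trans (mul_le_mul_of_nonneg_left hx1r (by positivity))
      calc |x₁ n| ^ ((1:ℝ)/2) = Real.sqrt |x₁ n| := by
            rw [Real.sqrt_eq_rpow]
        _ ≤ Real.sqrt ((2:ℝ) ^ ((n:ℝ) - (t₀:ℝ)) * r) := Real.sqrt_le_sqrt h3
        _ = (2:ℝ) ^ (((n:ℝ) - (t₀:ℝ))/2) * Real.sqrt r := by
            rw [Real.sqrt_mul (by positivity), Real.sqrt_eq_rpow,
              ← Real.rpow_mul (by norm_num)]
            ring_nf
    have hpow : (0:ℝ) ≤ |x₁ n| ^ ((1:ℝ)/2) := Real.rpow_nonneg (abs_nonneg _) _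
    have habs : |x₂ (n+1)| = (2:ℝ) ^ (-(n:ℝ)) * |d n| * |x₁ n| ^ ((1:ℝ)/2) := by
      rw [h2, abs_mul, abs_mul, abs_of_nonneg (by positivity : (0:ℝ) ≤ (2:ℝ) ^ (-(n:ℝ))),
        abs_of_nonneg hpow]
    have hexp : (2:ℝ) ^ (-(n:ℝ)) * 2 * (2:ℝ) ^ (((n:ℝ) - (t₀:ℝ))/2)
        ≤ (2:ℝ) ^ ((3 - ((↑(n+1):ℝ) - (t₀:ℝ)))/2) := by
      have : (2:ℝ) ^ (-(n:ℝ)) * 2 * (2:ℝ) ^ (((n:ℝ) - (t₀:ℝ))/2)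
          = (2:ℝ) ^ (-(n:ℝ) + 1 + ((n:ℝ) - (t₀:ℝ))/2) := by
        rw [Real.rpow_add two_pos, Real.rpow_add two_pos, Real.rpow_one]
      rw [this]
      apply Real.rpow_le_rpow_of_exponent_le one_le_two
      have ht0 : (0:ℝ) ≤ (t₀:ℝ) := Nat.cast_nonneg _
      push_cast
      linarith
    calc |x₂ (n+1)| = (2:ℝ) ^ (-(n:ℝ)) * |d n| * |x₁ n| ^ ((1:ℝ)/2) := habs
      _ ≤ (2:ℝ) ^ (-(n:ℝ)) * 2 * ((2:ℝ) ^ (((n:ℝ) - (t₀:ℝ))/2) * Real.sqrt r) := by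
          apply mul_le_mul (mul_le_mul_of_nonneg_left hdn (by positivity)) hxn hpow
            (by positivity)
      _ = ((2:ℝ) ^ (-(n:ℝ)) * 2 * (2:ℝ) ^ (((n:ℝ) - (t₀:ℝ))/2)) * Real.sqrt r := by
          ring
      _ ≤ (2:ℝ) ^ ((3 - ((↑(n+1):ℝ) - (t₀:ℝ)))/2) * Real.sqrt r :=
          mul_le_mul_of_nonneg_right hexp (Real.sqrt_nonneg _)
      _ ≤ (2:ℝ) ^ ((3 - ((↑(n+1):ℝ) - (t₀:ℝ)))/2) * (r + Real.sqrt r) := by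
          apply mul_le_mul_of_nonneg_left _ (by positivity)
          linarith
end
end
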